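/- arXiv:0705.3522 — 8 statements merged into one kernel-verified Lean document; each statement's English description precedes it below -/
import Mathlib

section
/- Let H be a Hopf algebra over a field K, let χ : H → K be a character (algebra homomorphism), let n be a natural number and z ∈ H. Then χ(h)^n · z = Σ h₍₁₎ z S(h₍₂₎) holds for every h ∈ H if and only if h·z = z·φ^n(h) holds for every h ∈ H, where φ : H → H is the map φ(h) = Σ χ(h₍₁₎) h₍₂₎. -/
open TensorProduct

section Defs

variable (K H : Type*) [CommRing K] [Ring H]

/-- The map `h ↦ Σ h₁ * z * S(h₂)` (adjoint-type action on `z`). -/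
noncomputable def sweedlerAd [HopfAlgebra K H] (z : H) : H →ₗ[K] H :=
  LinearMap.mul' K H ∘ₗ
    TensorProduct.map LinearMap.id
      (LinearMap.mulLeft K z ∘ₗ HopfAlgebra.antipode (R := K)) ∘ₗ Coalgebra.comul

/-- `φ(h) = Σ χ(h₁) h₂`. -/
noncomputable def phiMap [Bialgebra K H] (χ : H →ₐ[K] K) : H →ₗ[K] H :=
  (TensorProduct.lid K H).toLinearMap ∘ₗ
    TensorProduct.map χ.toLinearMap LinearMap.id ∘ₗ Coalgebra.comul

/-- `ψ(h) = Σ h₁ χ(h₂)`. -/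
noncomputable def psiMap [Bialgebra K H] (χ : H →ₐ[K] K) : H →ₗ[K] H :=
  (TensorProduct.rid K H).toLinearMap ∘ₗ
    TensorProduct.map LinearMap.id χ.toLinearMap ∘ₗ Coalgebra.comul

/-- `h ↦ Σ h₁ f(h₂)` for a linear functional `f`. -/
noncomputable def psiL [Bialgebra K H] (f : H →ₗ[K] K) : H →ₗ[K] H :=
  (TensorProduct.rid K H).toLinearMap ∘ₗ
    TensorProduct.map LinearMap.id f ∘ₗ Coalgebra.comul

/-- Convolution product of two linear functionals on a coalgebra. -/
noncomputable def conv [Bialgebra K H] (f g : H →ₗ[K] K) : H →ₗ[K] K :=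
  LinearMap.mul' K K ∘ₗ TensorProduct.map f g ∘ₗ Coalgebra.comul

/-- `n`-th convolution power of a linear functional, with unit the counit. -/
noncomputable def convPow [Bialgebra K H] (f : H →ₗ[K] K) : ℕ → (H →ₗ[K] K)
  | 0 => Coalgebra.counit
  | n + 1 => conv K H (convPow f n) f

/-- Group-like element of a bialgebra: `Δ(a) = a ⊗ a` and `ε(a) = 1`. -/
def IsGrouplike [Bialgebra K H] (a : H) : Prop :=
  Coalgebra.comul (R := K) a = a ⊗ₜ[K] a ∧ Coalgebra.counit (R := K) a = 1

/-- An ad-invariant integral on a Hopf algebra: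
`γ(1) = 1`, `Σ h₁ γ(h₂) = γ(h)·1`, and `Σ γ(h₁ x S(h₂)) = ε(h) γ(x)`. -/
def IsAdInvariantIntegral [HopfAlgebra K H] (γ : H →ₗ[K] K) : Prop :=
  γ 1 = 1 ∧ (∀ h : H, psiL K H γ h = γ h • (1 : H)) ∧
    ∀ h x : H, γ (sweedlerAd K H x h) = Coalgebra.counit (R := K) h * γ x

end Defs

/-- Gaussian (q-)binomial coefficient via the q-Pascal recursion
`binom(n+1,k+1)_q = binom(n,k)_q + q^(k+1) binom(n,k+1)_q`. -/
def qBinom {K : Type*} [CommRing K] (q : K) : ℕ → ℕ → K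
  | _, 0 => 1
  | 0, _ + 1 => 0
  | n + 1, k + 1 => qBinom q n k + q ^ (k + 1) * qBinom q n (k + 1)

section Helpers
open Coalgebra


variable (K H : Type*) [CommRing K] [Ring H] [HopfAlgebra K H]

noncomputable def phiL (f : H →ₗ[K] K) : H →ₗ[K] H :=
  (TensorProduct.lid K H).toLinearMap ∘ₗ
    TensorProduct.map f LinearMap.id ∘ₗ Coalgebra.comul

lemma phiL_apply (f : H →ₗ[K] K) {ι : Type*} {h : H} (r : Coalgebra.Repr K h ι) :
    phiL K H f h = ∑ i ∈ r.index, f (r.left i) • r.right i := by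
  simp only [phiL, LinearMap.comp_apply, ← r.eq, map_sum, TensorProduct.map_tmul,
    LinearMap.id_coe, id_eq, LinearEquiv.coe_coe, TensorProduct.lid_tmul]

lemma conv_apply (f g : H →ₗ[K] K) {ι : Type*} {h : H} (r : Coalgebra.Repr K h ι) :
    conv K H f g h = ∑ i ∈ r.index, f (r.left i) * g (r.right i) := by
  simp only [conv, LinearMap.comp_apply, ← r.eq, map_sum, TensorProduct.map_tmul,
    LinearMap.mul'_apply]

lemma sweedlerAd_apply (z : H) {ι : Type*} {h : H} (r : Coalgebra.Repr K h ι) :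
    sweedlerAd K H z h =
      ∑ i ∈ r.index, r.left i * (z * HopfAlgebra.antipode (R := K) (r.right i)) := by
  simp only [sweedlerAd, LinearMap.comp_apply, ← r.eq, map_sum, TensorProduct.map_tmul,
    LinearMap.id_coe, id_eq, LinearMap.mul'_apply, LinearMap.mulLeft_apply]

lemma counit_smul_left {ι : Type*} {h : H} (r : Coalgebra.Repr K h ι) :
    ∑ i ∈ r.index, Coalgebra.counit (R := K) (r.right i) • r.left i = h := by
  have := congrArg (TensorProduct.rid K H) (Coalgebra.sum_tmul_counit_eq r)
  simp only [map_sum, TensorProduct.rid_tmul, TensorProduct.rid_symm_apply] at this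
  simpa using this

lemma phiL_counit : phiL K H Coalgebra.counit = LinearMap.id := by
  ext h
  rw [phiL_apply K H _ (ℛ K h)]
  have := congrArg (TensorProduct.lid K H) (Coalgebra.sum_counit_tmul_eq (ℛ K h))
  simp only [map_sum, TensorProduct.lid_tmul] at this
  simpa using this

lemma phiL_conv (f g : H →ₗ[K] K) :
    phiL K H (conv K H f g) = phiL K H g ∘ₗ phiL K H f := by
  ext h
  set r := ℛ K h with hr
  set a₁ : (i : r.ι) → Coalgebra.Repr K (r.left i) (H × H) := fun i => ℛ K (r.left i) with ha₁
  set a₂ : (i : r.ι) → Coalgebra.Repr K (r.right i) (H × H) := fun i => ℛ K (r.right i) with ha₂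
  let T : H ⊗[K] (H ⊗[K] H) →ₗ[K] H :=
    (TensorProduct.lid K H).toLinearMap ∘ₗ
      TensorProduct.map f ((TensorProduct.lid K H).toLinearMap ∘ₗ
        TensorProduct.map g LinearMap.id)
  have E := congrArg T (Coalgebra.sum_tmul_tmul_eq r a₁ a₂)
  simp only [T, map_sum, LinearMap.comp_apply, TensorProduct.map_tmul, LinearMap.id_coe,
    id_eq, LinearEquiv.coe_coe, TensorProduct.lid_tmul, smul_smul] at E
  calc phiL K H (conv K H f g) h
      = ∑ i ∈ r.index, (∑ j ∈ (a₁ i).index,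
          f ((a₁ i).left j) * g ((a₁ i).right j)) • r.right i := by
        rw [phiL_apply K H _ r]
        exact Finset.sum_congr rfl fun i _ => by rw [conv_apply K H f g (a₁ i)]
    _ = ∑ i ∈ r.index, ∑ j ∈ (a₁ i).index,
          (f ((a₁ i).left j) * g ((a₁ i).right j)) • r.right i := by
        simp [Finset.sum_smul]
    _ = ∑ i ∈ r.index, ∑ j ∈ (a₂ i).index,
          (f (r.left i) * g ((a₂ i).left j)) • (a₂ i).right j := E
    _ = phiL K H g (phiL K H f h) := by
        rw [phiL_apply K H f r, map_sum]
        refine Finset.sum_congr rfl fun i _ => ?_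
        rw [map_smul, phiL_apply K H g (a₂ i), Finset.smul_sum]
        simp [smul_smul]

lemma phiMap_pow (χ : H →ₐ[K] K) (n : ℕ) :
    (phiMap K H χ) ^ n = phiL K H (convPow K H χ.toLinearMap n) := by
  induction n with
  | zero => rw [pow_zero, convPow, phiL_counit]; rfl
  | succ n ih =>
    rw [pow_succ', ih]
    show phiMap K H χ ∘ₗ phiL K H (convPow K H χ.toLinearMap n) = _
    rw [show convPow K H χ.toLinearMap (n+1) = conv K H (convPow K H χ.toLinearMap n)
      χ.toLinearMap from rfl, phiL_conv]
    rfl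

end Helpers

open Coalgebra

/-- `χⁿ(h) • z = Σ h₁ z S(h₂)` for all `h` iff `h z = z φⁿ(h)` for all `h`. -/
theorem stmt0 (K H : Type*) [Field K] [Ring H] [HopfAlgebra K H]
    (χ : H →ₐ[K] K) (n : ℕ) (z : H) :
    (∀ h : H, convPow K H χ.toLinearMap n h • z = sweedlerAd K H z h) ↔
      (∀ h : H, h * z = z * (phiMap K H χ ^ n) h) := by
  constructor
  · intro H1 h
    set r := ℛ K h with hr
    set a₁ : (i : r.ι) → Coalgebra.Repr K (r.left i) (H × H) := fun i => ℛ K (r.left i) with ha₁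
    set a₂ : (i : r.ι) → Coalgebra.Repr K (r.right i) (H × H) := fun i => ℛ K (r.right i) with ha₂
    let U : H ⊗[K] (H ⊗[K] H) →ₗ[K] H :=
      LinearMap.mul' K H ∘ₗ TensorProduct.map LinearMap.id
        (LinearMap.mul' K H ∘ₗ TensorProduct.map
          (LinearMap.mulLeft K z ∘ₗ HopfAlgebra.antipode (R := K)) LinearMap.id)
    have E := congrArg U (Coalgebra.sum_tmul_tmul_eq r a₁ a₂)
    simp only [U, map_sum, LinearMap.comp_apply, TensorProduct.map_tmul, LinearMap.id_coe,
      id_eq, LinearMap.mul'_apply, LinearMap.mulLeft_apply] at E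
    have hR : z * (phiMap K H χ ^ n) h
        = ∑ i ∈ r.index, ∑ j ∈ (a₁ i).index,
            (a₁ i).left j *
              (z * HopfAlgebra.antipode (R := K) ((a₁ i).right j) * r.right i) := by
      rw [phiMap_pow, phiL_apply K H _ r, Finset.mul_sum]
      refine Finset.sum_congr rfl fun i _ => ?_
      rw [mul_smul_comm, ← smul_mul_assoc, H1 (r.left i), sweedlerAd_apply K H z (a₁ i),
        Finset.sum_mul]
      exact Finset.sum_congr rfl fun j _ => by rw [mul_assoc]
    have hL : h * z = ∑ i ∈ r.index, ∑ j ∈ (a₂ i).index,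
        r.left i *
          (z * HopfAlgebra.antipode (R := K) ((a₂ i).left j) * (a₂ i).right j) := by
      have inner : ∀ i, ∑ j ∈ (a₂ i).index,
          z * HopfAlgebra.antipode (R := K) ((a₂ i).left j) * (a₂ i).right j
          = Coalgebra.counit (R := K) (r.right i) • z := by
        intro i
        calc ∑ j ∈ (a₂ i).index,
              z * HopfAlgebra.antipode (R := K) ((a₂ i).left j) * (a₂ i).right j
            = z * ∑ j ∈ (a₂ i).index,
              HopfAlgebra.antipode (R := K) ((a₂ i).left j) * (a₂ i).right j := by
              rw [Finset.mul_sum]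
              exact Finset.sum_congr rfl fun j _ => by rw [mul_assoc]
          _ = z * (Coalgebra.counit (R := K) (r.right i) • 1) := by
              rw [HopfAlgebra.sum_antipode_mul_eq_smul (a₂ i)]
          _ = Coalgebra.counit (R := K) (r.right i) • z := by
              rw [mul_smul_comm, mul_one]
      calc h * z = (∑ i ∈ r.index, Coalgebra.counit (R := K) (r.right i) • r.left i) * z := by
            rw [counit_smul_left K H r]
        _ = ∑ i ∈ r.index, r.left i * (Coalgebra.counit (R := K) (r.right i) • z) := by
            rw [Finset.sum_mul]
            exact Finset.sum_congr rfl fun i _ => by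
              rw [smul_mul_assoc, mul_smul_comm]
        _ = ∑ i ∈ r.index, ∑ j ∈ (a₂ i).index,
            r.left i *
              (z * HopfAlgebra.antipode (R := K) ((a₂ i).left j) * (a₂ i).right j) := by
            refine Finset.sum_congr rfl fun i _ => ?_
            rw [← inner i, Finset.mul_sum]
    rw [hL, hR]
    exact E.symm ▸ rfl
  · intro H2 h
    set r := ℛ K h with hr
    set a₁ : (i : r.ι) → Coalgebra.Repr K (r.left i) (H × H) := fun i => ℛ K (r.left i) with ha₁
    set a₂ : (i : r.ι) → Coalgebra.Repr K (r.right i) (H × H) := fun i => ℛ K (r.right i) with ha₂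
    let V : H ⊗[K] (H ⊗[K] H) →ₗ[K] H :=
      (TensorProduct.lid K H).toLinearMap ∘ₗ
        TensorProduct.map (convPow K H χ.toLinearMap n)
          (LinearMap.mulLeft K z ∘ₗ (LinearMap.mul' K H ∘ₗ
            TensorProduct.map LinearMap.id (HopfAlgebra.antipode (R := K))))
    have E := congrArg V (Coalgebra.sum_tmul_tmul_eq r a₁ a₂)
    simp only [V, map_sum, LinearMap.comp_apply, TensorProduct.map_tmul, LinearMap.id_coe,
      id_eq, LinearMap.mul'_apply, LinearMap.mulLeft_apply, LinearEquiv.coe_coe,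
      TensorProduct.lid_tmul] at E
    have hL : sweedlerAd K H z h
        = ∑ i ∈ r.index, ∑ j ∈ (a₁ i).index,
            convPow K H χ.toLinearMap n ((a₁ i).left j) •
              (z * ((a₁ i).right j * HopfAlgebra.antipode (R := K) (r.right i))) := by
      rw [sweedlerAd_apply K H z r]
      refine Finset.sum_congr rfl fun i _ => ?_
      rw [← mul_assoc, H2 (r.left i), phiMap_pow, phiL_apply K H _ (a₁ i),
        Finset.mul_sum, Finset.sum_mul]
      refine Finset.sum_congr rfl fun j _ => ?_
      rw [mul_smul_comm, smul_mul_assoc, mul_assoc]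
    have hR : (∑ i ∈ r.index, ∑ j ∈ (a₂ i).index,
          convPow K H χ.toLinearMap n (r.left i) •
            (z * ((a₂ i).left j * HopfAlgebra.antipode (R := K) ((a₂ i).right j))))
        = convPow K H χ.toLinearMap n h • z := by
      have step : ∀ i, ∑ j ∈ (a₂ i).index,
          convPow K H χ.toLinearMap n (r.left i) •
            (z * ((a₂ i).left j * HopfAlgebra.antipode (R := K) ((a₂ i).right j)))
          = (Coalgebra.counit (R := K) (r.right i) *
              convPow K H χ.toLinearMap n (r.left i)) • z := by
        intro i
        rw [← Finset.smul_sum, ← Finset.mul_sum,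
          HopfAlgebra.sum_mul_antipode_eq_smul (a₂ i)]
        rw [mul_smul_comm, mul_one, smul_smul, mul_comm]
      rw [Finset.sum_congr rfl fun i _ => step i, ← Finset.sum_smul]
      congr 1
      have key := congrArg (convPow K H χ.toLinearMap n) (counit_smul_left K H r)
      rw [map_sum] at key
      simp only [map_smul, smul_eq_mul] at key
      exact key
    rw [hL, E, hR]
end

section
/- Let H be a Hopf algebra with an ad-invariant integral γ (so γ(1) = 1, Σ h₍₁₎ γ(h₍₂₎) = γ(h)·1, and Σ γ(h₍₁₎ x S(h₍₂₎)) = ε(h) γ(x) for all h, x ∈ H). Let (H, g, χ) be a Yetter-Drinfeld datum for a primitive N-th root of unity q, and assume g^N ≠ 1. Then the following are equivalent: (a) χ^N(h) · (1 − g^N) = Σ h₍₁₎ (1 − g^N) S(h₍₂₎) for every h ∈ H; (b) χ^N = ε and g^N lies in the center of H. -/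
open TensorProduct

section Aux
variable {K H : Type*} [CommRing K] [Ring H] [HopfAlgebra K H]

lemma sweedlerAd_eq_lTensor (z : H) :
    sweedlerAd K H z = LinearMap.mul' K H ∘ₗ
      LinearMap.lTensor H (LinearMap.mulLeft K z ∘ₗ HopfAlgebra.antipode (R := K)) ∘ₗ
      Coalgebra.comul := rfl

lemma sweedlerAd_sub (z w : H) :
    sweedlerAd K H (z - w) = sweedlerAd K H z - sweedlerAd K H w := by
  have hm : LinearMap.mulLeft K (z - w) = LinearMap.mulLeft K z - LinearMap.mulLeft K w :=
    LinearMap.ext fun x => by simp [sub_mul]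
  rw [sweedlerAd_eq_lTensor, sweedlerAd_eq_lTensor, sweedlerAd_eq_lTensor, hm,
    LinearMap.sub_comp, LinearMap.lTensor_sub, LinearMap.sub_comp, LinearMap.comp_sub]

lemma sweedlerAd_of_comm (z : H) (hz : ∀ x : H, z * x = x * z) (h : H) :
    sweedlerAd K H z h = Coalgebra.counit (R := K) h • z := by
  have key : (LinearMap.mul' K H ∘ₗ
      TensorProduct.map LinearMap.id (LinearMap.mulLeft K z ∘ₗ HopfAlgebra.antipode (R := K)) :
        H ⊗[K] H →ₗ[K] H) =
      LinearMap.mulRight K z ∘ₗ LinearMap.mul' K H ∘ₗ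
        LinearMap.lTensor H (HopfAlgebra.antipode (R := K)) := by
    apply TensorProduct.ext'
    intro a b
    simp [mul_assoc, hz]
  have : sweedlerAd K H z h = (LinearMap.mulRight K z ∘ₗ LinearMap.mul' K H ∘ₗ
      LinearMap.lTensor H (HopfAlgebra.antipode (R := K))) (Coalgebra.comul h) := by
    rw [← key]; rfl
  rw [this]
  simp only [LinearMap.comp_apply, HopfAlgebra.mul_antipode_lTensor_comul_apply,
    LinearMap.mulRight_apply, Algebra.smul_def]

lemma comm_of_sweedlerAd (z : H)
    (hz : ∀ h : H, sweedlerAd K H z h = Coalgebra.counit (R := K) h • z) (x : H) :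
    x * z = z * x := by
  have hAd : sweedlerAd K H z =
      LinearMap.toSpanSingleton K H z ∘ₗ Coalgebra.counit := by
    apply LinearMap.ext
    intro h
    simp [hz h, LinearMap.toSpanSingleton_apply]
  set core : H ⊗[K] H →ₗ[K] H := LinearMap.mul' K H ∘ₗ
    TensorProduct.map LinearMap.id (LinearMap.mulLeft K z ∘ₗ HopfAlgebra.antipode (R := K))
    with hcore
  have hcc : core ∘ₗ Coalgebra.comul = sweedlerAd K H z := rfl
  set M : H ⊗[K] (H ⊗[K] H) →ₗ[K] H := LinearMap.mul' K H ∘ₗ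
    LinearMap.lTensor H (LinearMap.mulLeft K z ∘ₗ LinearMap.mul' K H ∘ₗ
      LinearMap.rTensor H (HopfAlgebra.antipode (R := K))) with hM
  set M' : (H ⊗[K] H) ⊗[K] H →ₗ[K] H := LinearMap.mul' K H ∘ₗ
    LinearMap.rTensor H core with hM'
  have hMM' : M ∘ₗ (TensorProduct.assoc K H H H).toLinearMap = M' := by
    apply TensorProduct.ext_threefold
    intro a b c
    simp [hM, hM', hcore, mul_assoc]
  have c1 : M' ((Coalgebra.comul (R := K)).rTensor H (Coalgebra.comul x)) = z * x := by
    rw [hM', LinearMap.comp_apply, ← LinearMap.comp_apply (core.rTensor H),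
      ← LinearMap.rTensor_comp, hcc, hAd, LinearMap.rTensor_comp,
      LinearMap.comp_apply, Coalgebra.rTensor_counit_comul]
    simp [LinearMap.toSpanSingleton_apply]
  have c2 : M ((Coalgebra.comul (R := K)).lTensor H (Coalgebra.comul x)) = x * z := by
    rw [hM, LinearMap.comp_apply, ← LinearMap.comp_apply (LinearMap.lTensor H _),
      ← LinearMap.lTensor_comp]
    have : (LinearMap.mulLeft K z ∘ₗ LinearMap.mul' K H ∘ₗ
        LinearMap.rTensor H (HopfAlgebra.antipode (R := K))) ∘ₗ Coalgebra.comul =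
        LinearMap.mulLeft K z ∘ₗ Algebra.linearMap K H ∘ₗ Coalgebra.counit := by
      rw [LinearMap.comp_assoc, LinearMap.comp_assoc, HopfAlgebra.mul_antipode_rTensor_comul]
    rw [this, LinearMap.lTensor_comp, LinearMap.comp_apply, LinearMap.lTensor_comp,
      LinearMap.comp_apply, Coalgebra.lTensor_counit_comul]
    simp [Algebra.smul_def, mul_comm]
  have hco := Coalgebra.coassoc_apply (R := K) x
  calc x * z = M ((Coalgebra.comul (R := K)).lTensor H (Coalgebra.comul x)) := c2.symm
    _ = M ((TensorProduct.assoc K H H H) ((Coalgebra.comul (R := K)).rTensor H (Coalgebra.comul x))) := by rw [hco]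
    _ = M' ((Coalgebra.comul (R := K)).rTensor H (Coalgebra.comul x)) := by rw [← hMM']; rfl
    _ = z * x := c1

lemma isGrouplike_pow {g : H} (hg : IsGrouplike K H g) (n : ℕ) :
    IsGrouplike K H (g ^ n) := by
  induction n with
  | zero => exact ⟨by simp [Algebra.TensorProduct.one_def], by simp⟩
  | succ n ih =>
    refine ⟨?_, ?_⟩
    · rw [pow_succ, Bialgebra.comul_mul, ih.1, hg.1, Algebra.TensorProduct.tmul_mul_tmul,
        ← pow_succ]
    · rw [pow_succ, Bialgebra.counit_mul, ih.2, hg.2, one_mul]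
end Aux


/-- with an ad-invariant integral and `gᴺ ≠ 1`,
`χᴺ(h) • (1 − gᴺ) = Σ h₁ (1 − gᴺ) S(h₂)` for all `h` iff `χᴺ = ε` and `gᴺ` central. -/
theorem stmt2 (K H : Type*) [Field K] [CharZero K] [Ring H] [HopfAlgebra K H]
    (γ : H →ₗ[K] K) (hγ : IsAdInvariantIntegral K H γ)
    (N : ℕ) (q : K) (hq : IsPrimitiveRoot q N)
    (g : H) (hg : IsGrouplike K H g)
    (χ : H →ₐ[K] K) (hχg : χ g = q)
    (hYD : ∀ h : H, g * phiMap K H χ h = psiMap K H χ h * g)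
    (hgN : g ^ N ≠ 1) :
    (∀ h : H, convPow K H χ.toLinearMap N h • (1 - g ^ N) =
        sweedlerAd K H (1 - g ^ N) h) ↔
      (convPow K H χ.toLinearMap N = Coalgebra.counit ∧ g ^ N ∈ Set.center H) := by
  obtain ⟨hγ1, hγ2, hγ3⟩ := hγ
  have hgl := isGrouplike_pow hg N
  have hγg : γ (g ^ N) = 0 := by
    have h1 := hγ2 (g ^ N)
    have h2 : psiL K H γ (g ^ N) = γ (g ^ N) • g ^ N := by
      simp [psiL, hgl.1]
    rw [h2] at h1
    by_contra hc
    have h3 := congrArg (fun v => (γ (g ^ N))⁻¹ • v) h1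
    simp only [smul_smul, inv_mul_cancel₀ hc, one_smul] at h3
    exact hgN h3
  have hγz : γ (1 - g ^ N) = 1 := by
    rw [map_sub, hγg, hγ1, sub_zero]
  constructor
  · intro hh
    have hε : ∀ h : H, convPow K H χ.toLinearMap N h = Coalgebra.counit (R := K) h := by
      intro h
      have := congrArg γ (hh h)
      rw [map_smul, hγ3 h (1 - g ^ N), hγz, smul_eq_mul, mul_one, mul_one] at this
      exact this
    have hεe : convPow K H χ.toLinearMap N = Coalgebra.counit := LinearMap.ext hε
    refine ⟨hεe, ?_⟩
    have hadg : ∀ h : H, sweedlerAd K H (g ^ N) h =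
        Coalgebra.counit (R := K) h • g ^ N := by
      intro h
      have h1 := hh h
      rw [hε h, sweedlerAd_sub] at h1
      have h2 := sweedlerAd_of_comm (K := K) (1 : H) (fun x => by rw [one_mul, mul_one]) h
      rw [LinearMap.sub_apply, h2] at h1
      rw [eq_sub_iff_add_eq] at h1
      have : sweedlerAd K H (g ^ N) h =
          Coalgebra.counit (R := K) h • (1:H) - Coalgebra.counit (R := K) h • (1 - g ^ N) := by
        rw [← h1]
        abel
      rw [this, smul_sub]
      abel
    exact Semigroup.mem_center_iff.mpr fun y => comm_of_sweedlerAd (g ^ N) hadg y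
  · rintro ⟨hεe, hc⟩
    intro h
    rw [hεe]
    have hcomm : ∀ x : H, (1 - g ^ N) * x = x * (1 - g ^ N) := by
      intro x
      have := (Semigroup.mem_center_iff.mp hc x).symm
      rw [sub_mul, mul_sub, one_mul, mul_one, this]
    rw [sweedlerAd_of_comm _ hcomm]
end

section
/- Let K be a field of characteristic 0, H a Hopf algebra, g ∈ H group-like with g^{N/2} central among the relevant elements, and x ∈ H satisfying Δ(x) = g^{N/2} ⊗ x + x ⊗ 1 and x g + g x = 0, where N/2 is even (so g^{N/2} x = x g^{N/2}). If H is finite dimensional, then x = λ (1 − g^{N/2}) for some λ ∈ K, and combining with x g + g x = 0 one obtains x g = 0 and hence x = 0. -/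
open TensorProduct

section LemN
variable {K H : Type*} [Field K] [CharZero K] [Ring H] [HopfAlgebra K H] [FiniteDimensional K H]

/-- A nilpotent `(c,1)`-skew-primitive element commuting with the invertible grouplike `c`
is zero (char 0). -/
lemma nilp_skew_prim_eq_zero (c y : H) (hcu : IsUnit c) (hcy : c * y = y * c)
    (hΔ : Coalgebra.comul (R := K) y = c ⊗ₜ[K] y + y ⊗ₜ[K] 1) :
    ∀ s : ℕ, y ^ s = 0 → y = 0 := by
  intro s
  induction s using Nat.strong_induction_on with
  | _ s ih =>
    intro hs
    match s, ih with
    | 0, ih =>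
      have h1 : (1 : H) = 0 := by simpa using hs
      calc y = y * 1 := (mul_one y).symm
        _ = 0 := by rw [h1, mul_zero]
    | 1, ih => simpa using hs
    | (n+2), ih =>
      classical
      set s := n + 2 with hsdef
      by_cases hli : LinearIndependent K (fun k : Fin s => y ^ (k : ℕ))
      · -- extraction argument
        have hr := hli.linearIndepOn_id
        let b := Module.Basis.extend hr
        have hsub : Set.range (fun k : Fin s => y ^ (k : ℕ)) ⊆ hr.extend (Set.subset_univ _) :=
          hr.subset_extend _
        have hmem : ∀ k : Fin s, y ^ (k : ℕ) ∈ hr.extend (Set.subset_univ _) := fun k =>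
          hsub ⟨k, rfl⟩
        let i₀ : ↥(hr.extend (Set.subset_univ _)) := ⟨y ^ (n+1), hmem ⟨n+1, by omega⟩⟩
        let f : H →ₗ[K] K := b.coord i₀
        have hf : ∀ k : Fin s, f (y ^ (k : ℕ)) = if (k : ℕ) = n + 1 then 1 else 0 := by
          intro k
          have hiff : (⟨y ^ (k : ℕ), hmem k⟩ : ↥(hr.extend (Set.subset_univ _))) = i₀ ↔ (k:ℕ) = n+1 := by
            constructor
            · intro h
              have h2 : y ^ (k : ℕ) = y ^ (n+1) := congrArg Subtype.val h
              have := hli.injective (a₁ := k) (a₂ := ⟨n+1, by omega⟩) h2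
              simpa [Fin.ext_iff] using this
            · intro h; apply Subtype.ext; simp [i₀, h]
          have hb : b ⟨y ^ (k : ℕ), hmem k⟩ = y ^ (k : ℕ) := Module.Basis.extend_apply_self hr _
          calc f (y ^ (k : ℕ)) = (b.repr (b ⟨y ^ (k : ℕ), hmem k⟩)) i₀ := by rw [hb]; rfl
            _ = (Finsupp.single ⟨y ^ (k : ℕ), hmem k⟩ (1:K)) i₀ := by rw [b.repr_self]
            _ = if (k:ℕ) = n + 1 then 1 else 0 := by
                rw [Finsupp.single_apply]
                simp only [hiff]
        -- the comultiplication of y ^ s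
        have hcomm : Commute (c ⊗ₜ[K] y) (y ⊗ₜ[K] (1:H)) := by
          unfold Commute SemiconjBy
          rw [Algebra.TensorProduct.tmul_mul_tmul, Algebra.TensorProduct.tmul_mul_tmul,
            mul_one, one_mul, hcy]
        have h1 : Coalgebra.comul (R := K) (y ^ s) = (c ⊗ₜ[K] y + y ⊗ₜ[K] (1:H)) ^ s := by
          have := map_pow (Bialgebra.comulAlgHom K H) y s
          simpa [Bialgebra.comulAlgHom_apply, hΔ] using this
        rw [hs, map_zero] at h1
        have hΔpow : (0 : H ⊗[K] H) =
            ∑ k ∈ Finset.range (s+1), (c ⊗ₜ[K] y) ^ k * (y ⊗ₜ[K] (1:H)) ^ (s - k)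
              * (Nat.choose s k : H ⊗[K] H) := h1.trans (hcomm.add_pow s)
        -- apply (id ⊗ f) then rid
        let G : H ⊗[K] H →ₗ[K] H :=
          (TensorProduct.rid K H).toLinearMap ∘ₗ TensorProduct.map LinearMap.id f
        have hG : ∀ (a b : H), G (a ⊗ₜ[K] b) = f b • a := by
          intro a b; simp [G]
        have hkey : (0 : H) = (n+2 : ℕ) • (c ^ (n+1) * y) := by
          calc (0:H) = G 0 := (map_zero G).symm
            _ = G (∑ k ∈ Finset.range (s+1), (c ⊗ₜ[K] y) ^ k * (y ⊗ₜ[K] (1:H)) ^ (s - k)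
                  * (Nat.choose s k : H ⊗[K] H)) := by rw [← hΔpow]
            _ = ∑ k ∈ Finset.range (s+1),
                  (Nat.choose s k) • (f (y ^ k) • (c ^ k * y ^ (s - k))) := by
                rw [map_sum]
                refine Finset.sum_congr rfl fun k hk => ?_
                have ht : (c ⊗ₜ[K] y) ^ k * (y ⊗ₜ[K] (1:H)) ^ (s - k) * (Nat.choose s k : H ⊗[K] H)
                    = (Nat.choose s k) • ((c ^ k * y ^ (s-k)) ⊗ₜ[K] (y ^ k)) := by
                  rw [Algebra.TensorProduct.tmul_pow, Algebra.TensorProduct.tmul_pow,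
                    Algebra.TensorProduct.tmul_mul_tmul, one_pow, mul_one, nsmul_eq_mul]
                  exact ((Nat.cast_commute _ _).eq).symm
                rw [ht, map_nsmul, hG]
            _ = (n+2:ℕ) • (c ^ (n+1) * y) := by
                rw [Finset.sum_eq_single (n+1)]
                · have : f (y ^ (n+1)) = 1 := by
                    have := hf ⟨n+1, by omega⟩
                    simpa using this
                  rw [this, one_smul]
                  have hc : Nat.choose s (n+1) = n+2 := by
                    rw [hsdef]
                    simpa using Nat.choose_succ_self_right (n+1)
                  rw [hc]
                  have h12 : n + 2 - (n+1) = 1 := by omega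
                  rw [h12, pow_one]
                · intro k hk hkne
                  rcases Nat.lt_or_ge k s with hks | hks
                  · have : f (y ^ k) = 0 := by
                      have := hf ⟨k, hks⟩
                      simp only [this]
                      simp [hkne]
                    rw [this, zero_smul, smul_zero]
                  · have hkeq : k = s := by
                      have : k < s + 1 := Finset.mem_range.mp hk
                      omega
                    subst hkeq
                    rw [hs, map_zero, zero_smul, smul_zero]
                · intro h
                  exact absurd (Finset.mem_range.mpr (by omega)) h
        have hz : c ^ (n+1) * y = 0 := by
          have h2 : ((n+2 : ℕ) : K) • (c ^ (n+1) * y) = 0 := by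
            rw [Nat.cast_smul_eq_nsmul]; exact hkey.symm
          rcases smul_eq_zero.mp h2 with h | h
          · exact absurd h (by exact_mod_cast (by omega : (n+2:ℕ) ≠ 0))
          · exact h
        exact (hcu.pow (n+1)).mul_left_cancel (by rw [hz, mul_zero])
      · -- dependent case: reduce the exponent
        obtain ⟨gc, hsum, i, hgi⟩ := Fintype.not_linearIndependent_iff.mp hli
        let jset : Finset (Fin s) := Finset.univ.filter (fun k => gc k ≠ 0)
        have hjne : jset.Nonempty := ⟨i, by simp [jset, hgi]⟩
        let j := jset.min' hjne
        have hjmem : gc j ≠ 0 := by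
          have := jset.min'_mem hjne
          simpa [jset] using this
        have hmul : (∑ k : Fin s, gc k • y ^ (k:ℕ)) * y ^ (n+1-(j:ℕ)) = 0 := by
          rw [hsum, zero_mul]
        rw [Finset.sum_mul] at hmul
        have hred : ∀ k : Fin s, (gc k • y ^ (k:ℕ)) * y ^ (n+1-(j:ℕ))
            = if k = j then gc j • y ^ (n+1) else 0 := by
          intro k
          rcases lt_trichotomy k j with hk | hk | hk
          · have : gc k = 0 := by
              by_contra hne
              exact absurd (jset.min'_le k (by simp [jset, hne])) (not_le.mpr hk)
            simp [this, if_neg (ne_of_lt hk)]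
          · subst hk
            rw [smul_mul_assoc, ← pow_add, if_pos rfl]
            congr 2
            have : (j : ℕ) ≤ n + 1 := by omega
            omega
          · have hks : (k:ℕ) + (n+1-(j:ℕ)) ≥ s := by
              have h1 : (j:ℕ) < (k:ℕ) := hk
              have h2 : (k:ℕ) < s := k.2
              have h3 : (j:ℕ) < s := j.2
              omega
            rw [smul_mul_assoc, ← pow_add, if_neg (ne_of_gt hk)]
            have : y ^ ((k:ℕ) + (n+1-(j:ℕ))) = 0 := by
              have : y ^ ((k:ℕ) + (n+1-(j:ℕ))) = y ^ s * y ^ (((k:ℕ) + (n+1-(j:ℕ))) - s) := by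
                rw [← pow_add]; congr 1; omega
              rw [this, hs, zero_mul]
            rw [this, smul_zero]
        rw [Finset.sum_congr rfl (fun k _ => hred k)] at hmul
        rw [Finset.sum_ite_eq' Finset.univ j (fun _ => gc j • y ^ (n+1))] at hmul
        simp only [Finset.mem_univ, if_true] at hmul
        have hyn : y ^ (n+1) = 0 := by
          rcases smul_eq_zero.mp hmul with h | h
          · exact absurd h hjmem
          · exact h
        exact ih (n+1) (by omega) hyn

end LemN

set_option maxHeartbeats 2000000
set_option synthInstance.maxHeartbeats 400000

lemma adjoin_pair_ext {K : Type*} {H : Type*} [CommSemiring K] [Semiring H] [Algebra K H]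
    {R : Type*} [Semiring R] [Algebra K R] {c x : H}
    (φ ψ : ↥(Algebra.adjoin K ({c, x} : Set H)) →ₐ[K] R)
    (h1 : φ ⟨c, Algebra.subset_adjoin (Set.mem_insert _ _)⟩
        = ψ ⟨c, Algebra.subset_adjoin (Set.mem_insert _ _)⟩)
    (h2 : φ ⟨x, Algebra.subset_adjoin (Set.mem_insert_of_mem _ rfl)⟩
        = ψ ⟨x, Algebra.subset_adjoin (Set.mem_insert_of_mem _ rfl)⟩) : φ = ψ := by
  apply AlgHom.ext
  intro a
  obtain ⟨a, ha⟩ := a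
  refine Algebra.adjoin_induction (p := fun z hz => φ ⟨z, hz⟩ = ψ ⟨z, hz⟩) ?_ ?_ ?_ ?_ ha
  · rintro z (rfl | rfl)
    · exact h1
    · exact h2
  · intro r; exact (φ.commutes r).trans (ψ.commutes r).symm
  · intro a b ha' hb' ha hb
    show φ (⟨a, ha'⟩ + ⟨b, hb'⟩) = ψ (⟨a, ha'⟩ + ⟨b, hb'⟩)
    rw [map_add, map_add, ha, hb]
  · intro a b ha' hb' ha hb
    show φ (⟨a, ha'⟩ * ⟨b, hb'⟩) = ψ (⟨a, ha'⟩ * ⟨b, hb'⟩)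
    rw [map_mul, map_mul, ha, hb]

/-- in a finite dimensional Hopf algebra (char 0), a
`(gᵐ,1)`-skew-primitive `x` with `m` even and `xg + gx = 0` satisfies
`x = λ(1 − gᵐ)`, `xg = 0` and `x = 0`. -/
theorem stmt5 (K H : Type*) [Field K] [CharZero K] [Ring H] [HopfAlgebra K H]
    [FiniteDimensional K H]
    (g : H) (hg : IsGrouplike K H g) (hgu : IsUnit g)
    (m : ℕ) (hm : Even m)
    (x : H)
    (hΔx : Coalgebra.comul (R := K) x = (g ^ m) ⊗ₜ[K] x + x ⊗ₜ[K] 1)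
    (hanti : x * g + g * x = 0) :
    (∃ lam : K, x = lam • (1 - g ^ m)) ∧ x * g = 0 ∧ x = 0 := by
  classical
  obtain ⟨hgΔ, hgε⟩ := hg
  have hcu : IsUnit (g ^ m) := hgu.pow m
  have hgx : g * x = -(x * g) := eq_neg_of_add_eq_zero_right hanti
  -- g² commutes with x
  have hg2x : g ^ 2 * x = x * g ^ 2 := by
    have h1 : g * (g * x) = x * (g * g) := by
      rw [hgx, mul_neg, ← mul_assoc, hgx, neg_mul, neg_neg, mul_assoc]
    calc g ^ 2 * x = g * (g * x) := by rw [pow_two, mul_assoc]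
      _ = x * (g * g) := h1
      _ = x * g ^ 2 := by rw [pow_two]
  -- c commutes with x
  have hcx : g ^ m * x = x * g ^ m := by
    obtain ⟨t, rfl⟩ := hm
    have : ∀ t : ℕ, g ^ (2 * t) * x = x * g ^ (2 * t) := by
      intro t
      induction t with
      | zero => simp
      | succ t iht =>
        have : 2 * (t+1) = 2 * t + 2 := by ring
        rw [this, pow_add, mul_assoc, hg2x, ← mul_assoc, iht, mul_assoc]
    have h2 : t + t = 2 * t := by ring
    rw [h2]; exact this t
  -- comul of c
  have hcΔ : Coalgebra.comul (R := K) (g ^ m) = (g ^ m) ⊗ₜ[K] (g ^ m) := by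
    have := map_pow (Bialgebra.comulAlgHom K H) g m
    rw [Bialgebra.comulAlgHom_apply, Bialgebra.comulAlgHom_apply, hgΔ,
      Algebra.TensorProduct.tmul_pow] at this
    exact this
  -- it suffices to prove x = 0
  suffices hx0 : x = 0 by
    refine ⟨⟨0, by rw [hx0, zero_smul]⟩, by rw [hx0, zero_mul], hx0⟩
  -- the commutative subalgebra A generated by c and x
  set c : H := g ^ m with hcdef
  have hcomm : ∀ a ∈ ({c, x} : Set H), ∀ b ∈ ({c, x} : Set H), a * b = b * a := by
    rintro a (rfl | rfl) b (rfl | rfl) <;> first | rfl | exact hcx | exact hcx.symm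
  set A : Subalgebra K H := Algebra.adjoin K ({c, x} : Set H) with hAdef
  letI : CommRing A := Algebra.adjoinCommRingOfComm K hcomm
  have hcA : c ∈ A := Algebra.subset_adjoin (Set.mem_insert _ _)
  have hxA : x ∈ A := Algebra.subset_adjoin (Set.mem_insert_of_mem _ rfl)
  set cA : A := ⟨c, hcA⟩ with hcAdef
  set xA : A := ⟨x, hxA⟩ with hxAdef
  -- cA is a unit in A
  have hcAu : IsUnit cA := by
    have hinj : Function.Injective (LinearMap.mulLeft K cA) := by
      intro a b hab
      have : c * (a : H) = c * (b : H) := congrArg Subtype.val hab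
      exact Subtype.ext (hcu.mul_left_cancel this)
    obtain ⟨b, hb⟩ := (LinearMap.injective_iff_surjective.mp hinj) 1
    exact IsUnit.of_mul_eq_one b hb
  -- the tensor embedding
  set TT : A ⊗[K] A →ₐ[K] H ⊗[K] H := Algebra.TensorProduct.map A.val A.val with hTTdef
  have hTTinj : Function.Injective TT := by
    have h1 : Function.Injective (LinearMap.rTensor H (A.toSubmodule.subtype)) :=
      Module.Flat.rTensor_preserves_injective_linearMap _ Subtype.val_injective
    have h2 : Function.Injective (LinearMap.lTensor A (A.toSubmodule.subtype)) :=
      Module.Flat.lTensor_preserves_injective_linearMap _ Subtype.val_injective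
    have heq : ∀ z : A ⊗[K] A, TT z =
        (LinearMap.rTensor H (A.toSubmodule.subtype)) ((LinearMap.lTensor A (A.toSubmodule.subtype)) z) := by
      intro z
      induction z using TensorProduct.induction_on with
      | zero => simp
      | tmul a b =>
        rw [LinearMap.lTensor_tmul, LinearMap.rTensor_tmul, hTTdef,
          Algebra.TensorProduct.map_tmul]
        rfl
      | add a b ha hb => rw [map_add, map_add, map_add, ha, hb]
    intro z w hzw
    rw [heq, heq] at hzw
    exact h2 (h1 hzw)
  have hmemΔ : ∀ a : A, (Bialgebra.comulAlgHom K H) (a : H) ∈ TT.range := by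
    have mem1 : (Bialgebra.comulAlgHom K H) c ∈ TT.range := by
      apply (AlgHom.mem_range TT).mpr
      refine ⟨cA ⊗ₜ[K] cA, ?_⟩
      rw [hTTdef, Algebra.TensorProduct.map_tmul, Bialgebra.comulAlgHom_apply]
      exact hcΔ.symm
    have mem2 : (Bialgebra.comulAlgHom K H) x ∈ TT.range := by
      apply (AlgHom.mem_range TT).mpr
      refine ⟨cA ⊗ₜ[K] xA + xA ⊗ₜ[K] 1, ?_⟩
      rw [hTTdef, map_add, Algebra.TensorProduct.map_tmul, Algebra.TensorProduct.map_tmul,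
        Bialgebra.comulAlgHom_apply, hΔx]
      simp
      rfl
    have hle : A ≤ Subalgebra.comap (Bialgebra.comulAlgHom K H) TT.range := by
      show Algebra.adjoin K ({c, x} : Set H) ≤ _
      apply Algebra.adjoin_le
      rintro z (rfl | rfl)
      · exact mem1
      · exact mem2
    exact fun a => hle a.2
  -- the comultiplication of A
  set e : (A ⊗[K] A) ≃ₐ[K] TT.range := AlgEquiv.ofInjective TT hTTinj with hedef
  set ΔA : A →ₐ[K] A ⊗[K] A :=
    (e.symm.toAlgHom).comp
      (((Bialgebra.comulAlgHom K H).comp A.val).codRestrict TT.range hmemΔ) with hΔAdef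
  have hΔAc : ΔA cA = cA ⊗ₜ[K] cA := by
    rw [hΔAdef]
    simp only [AlgHom.coe_comp, Function.comp_apply, AlgEquiv.toAlgHom_eq_coe, AlgHom.coe_coe]
    apply (AlgEquiv.symm_apply_eq e).mpr
    apply Subtype.ext
    rw [hedef]
    show ((Bialgebra.comulAlgHom K H).comp A.val) cA = ((AlgEquiv.ofInjective TT hTTinj) (cA ⊗ₜ[K] cA) : H ⊗[K] H)
    rw [AlgEquiv.ofInjective_apply, hTTdef, Algebra.TensorProduct.map_tmul]
    show (Bialgebra.comulAlgHom K H) c = (c : H) ⊗ₜ[K] (c : H)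
    rw [Bialgebra.comulAlgHom_apply]; exact hcΔ
  have hΔAx : ΔA xA = cA ⊗ₜ[K] xA + xA ⊗ₜ[K] 1 := by
    rw [hΔAdef]
    simp only [AlgHom.coe_comp, Function.comp_apply, AlgEquiv.toAlgHom_eq_coe, AlgHom.coe_coe]
    apply (AlgEquiv.symm_apply_eq e).mpr
    apply Subtype.ext
    rw [hedef]
    show ((Bialgebra.comulAlgHom K H).comp A.val) xA
      = ((AlgEquiv.ofInjective TT hTTinj) (cA ⊗ₜ[K] xA + xA ⊗ₜ[K] 1) : H ⊗[K] H)
    rw [AlgEquiv.ofInjective_apply, hTTdef, map_add, Algebra.TensorProduct.map_tmul,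
      Algebra.TensorProduct.map_tmul]
    show (Bialgebra.comulAlgHom K H) x = (c : H) ⊗ₜ[K] (x : H) + (x:H) ⊗ₜ[K] ((1 : A) : H)
    rw [Bialgebra.comulAlgHom_apply, hΔx]
    rfl
  -- the algebraically closed field
  set K' : Type _ := AlgebraicClosure K with hK'def
  haveI : CharZero K' := charZero_of_injective_algebraMap (algebraMap K K').injective
  -- finiteness of the set of characters
  haveI hfinT : Finite (A →ₐ[K] K') := by
    have hli := linearIndependent_toLinearMap K A K'
    have hcard := hli.cardinalMk_le_finrank
    exact Cardinal.lt_aleph0_iff_finite.mp (lt_of_le_of_lt hcard (Cardinal.nat_lt_aleph0 _))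
  haveI := Fintype.ofFinite (A →ₐ[K] K')
  -- convolution of characters
  let conv : (A →ₐ[K] K') → (A →ₐ[K] K') → (A →ₐ[K] K') := fun χ ψ =>
    (Algebra.TensorProduct.lift χ ψ (fun a b => Commute.all _ _)).comp ΔA
  have hconvc : ∀ χ ψ, conv χ ψ cA = χ cA * ψ cA := by
    intro χ ψ
    show (Algebra.TensorProduct.lift χ ψ (fun a b => Commute.all _ _)) (ΔA cA) = _
    rw [hΔAc, Algebra.TensorProduct.lift_tmul]
  have hconvx : ∀ χ ψ, conv χ ψ xA = χ cA * ψ xA + χ xA := by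
    intro χ ψ
    show (Algebra.TensorProduct.lift χ ψ (fun a b => Commute.all _ _)) (ΔA xA) = _
    rw [hΔAx, map_add, Algebra.TensorProduct.lift_tmul, Algebra.TensorProduct.lift_tmul,
      map_one, mul_one]
  -- conjugation by g
  obtain ⟨u, hu⟩ := hgu
  have hgu1 : g * (↑u⁻¹ : H) = 1 := by rw [← hu]; exact u.mul_inv
  have huc : ∀ a b : H, ((u:H) * a * ↑u⁻¹) * ((u:H) * b * ↑u⁻¹) = (u:H) * (a * b) * ↑u⁻¹ := by
    intro a b
    have h1 : (↑u⁻¹ : H) * ↑u = 1 := u.inv_mul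
    calc ((u:H) * a * ↑u⁻¹) * ((u:H) * b * ↑u⁻¹)
        = (u:H) * (a * ((↑u⁻¹ * ↑u) * (b * ↑u⁻¹))) := by simp only [mul_assoc]
      _ = (u:H) * (a * (b * ↑u⁻¹)) := by rw [h1, one_mul]
      _ = (u:H) * (a * b) * ↑u⁻¹ := by simp only [mul_assoc]
  let σH : H →ₐ[K] H :=
    { toFun := fun h => (u:H) * h * ↑u⁻¹
      map_one' := by show (u:H) * 1 * ↑u⁻¹ = 1; rw [mul_one]; exact u.mul_inv
      map_mul' := fun a b => (huc a b).symm
      map_zero' := by show (u:H) * 0 * ↑u⁻¹ = 0; rw [mul_zero, zero_mul]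
      map_add' := fun a b => by
        show (u:H) * (a + b) * ↑u⁻¹ = (u:H) * a * ↑u⁻¹ + (u:H) * b * ↑u⁻¹
        rw [mul_add, add_mul]
      commutes' := fun r => by
        show (u:H) * algebraMap K H r * ↑u⁻¹ = algebraMap K H r
        rw [Algebra.algebraMap_eq_smul_one, mul_smul_comm, smul_mul_assoc, mul_one, u.mul_inv] }
  have hgc : g * c = c * g := ((Commute.refl g).pow_right m).eq
  have hσc : σH c = c := by
    show (u:H) * c * ↑u⁻¹ = c
    rw [hu, hgc, mul_assoc, hgu1, mul_one]
  have hσx : σH x = -x := by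
    show (u:H) * x * ↑u⁻¹ = -x
    rw [hu, hgx, neg_mul, mul_assoc, hgu1, mul_one]
  have hσA : ∀ a ∈ A, σH a ∈ A := by
    have h1 : (Algebra.adjoin K ({c, x} : Set H)).map σH ≤ A := by
      rw [AlgHom.map_adjoin]
      apply Algebra.adjoin_le
      rintro z ⟨w, hw, rfl⟩
      rcases hw with rfl | rfl
      · rw [hσc]; exact hcA
      · rw [hσx]; exact neg_mem hxA
    intro a ha
    exact h1 ⟨a, ha, rfl⟩
  let σA : A →ₐ[K] A := (σH.comp A.val).codRestrict A (fun a => hσA _ a.2)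
  have hσAc : σA cA = cA := Subtype.ext hσc
  have hσAx : σA xA = -xA := Subtype.ext (by rw [show ((-xA : A) : H) = -x from rfl]; exact hσx)
  have hσσ : σA.comp σA = AlgHom.id K A := by
    apply adjoin_pair_ext
    · show σA (σA cA) = cA
      rw [hσAc, hσAc]
    · show σA (σA xA) = xA
      rw [hσAx, map_neg, hσAx, neg_neg]
  -- the sum of the values of the characters at xA vanishes
  set S : K' := ∑ χ : A →ₐ[K] K', χ xA with hSdef
  have hS0 : S = 0 := by
    have hbij : Function.Bijective (fun χ : A →ₐ[K] K' => χ.comp σA) := by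
      apply Finite.injective_iff_bijective.mp
      intro χ₁ χ₂ h
      have h2 := congrArg (fun ψ : A →ₐ[K] K' => ψ.comp σA) h
      simp only [AlgHom.comp_assoc, hσσ, AlgHom.comp_id] at h2
      exact h2
    have h1 : ∑ χ : A →ₐ[K] K', (χ.comp σA) xA = S :=
      Fintype.sum_bijective _ hbij _ _ (fun χ => rfl)
    have h2 : ∀ χ : A →ₐ[K] K', (χ.comp σA) xA = - χ xA := by
      intro χ
      show χ (σA xA) = _
      rw [hσAx, map_neg]
    rw [Finset.sum_congr rfl (fun χ _ => h2 χ), Finset.sum_neg_distrib, ← hSdef] at h1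
    have : (2 : K') * S = 0 := by linear_combination (-1 : K') * h1
    rcases mul_eq_zero.mp this with h | h
    · exact absurd h two_ne_zero
    · exact h
  -- every character kills xA
  haveI : Nonempty (A →ₐ[K] K') :=
    ⟨((Algebra.ofId K K').comp (Bialgebra.counitAlgHom K H)).comp A.val⟩
  have hχx0 : ∀ χ₀ : A →ₐ[K] K', χ₀ xA = 0 := by
    intro χ₀
    have hc0 : χ₀ cA ≠ 0 := (hcAu.map χ₀).ne_zero
    have hinj : Function.Injective (fun χ : A →ₐ[K] K' => conv χ₀ χ) := by
      intro χ₁ χ₂ h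
      have h' : conv χ₀ χ₁ = conv χ₀ χ₂ := h
      have e1 : χ₀ cA * χ₁ cA = χ₀ cA * χ₂ cA := by
        rw [← hconvc χ₀ χ₁, ← hconvc χ₀ χ₂, h']
      have e2 : χ₀ cA * χ₁ xA + χ₀ xA = χ₀ cA * χ₂ xA + χ₀ xA := by
        rw [← hconvx χ₀ χ₁, ← hconvx χ₀ χ₂, h']
      exact adjoin_pair_ext χ₁ χ₂ (mul_left_cancel₀ hc0 e1)
        (mul_left_cancel₀ hc0 (add_right_cancel e2))
    have hbij := Finite.injective_iff_bijective.mp hinj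
    have h1 : ∑ χ : A →ₐ[K] K', (conv χ₀ χ) xA = S :=
      Fintype.sum_bijective _ hbij _ _ (fun χ => rfl)
    have h2 : ∑ χ : A →ₐ[K] K', (conv χ₀ χ) xA
        = χ₀ cA * S + (Fintype.card (A →ₐ[K] K') : K') * χ₀ xA := by
      rw [Finset.sum_congr rfl (fun χ _ => hconvx χ₀ χ), Finset.sum_add_distrib,
        ← Finset.mul_sum, ← hSdef, Finset.sum_const, Finset.card_univ, nsmul_eq_mul]
    rw [h1, hS0, mul_zero, zero_add] at h2
    rcases mul_eq_zero.mp h2.symm with h | h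
    · exact absurd h (Nat.cast_ne_zero.mpr Fintype.card_ne_zero)
    · exact h
  -- xA is nilpotent
  have hnil : IsNilpotent xA := by
    apply nilpotent_iff_mem_prime.mpr
    intro P hP
    haveI := hP
    haveI : Nontrivial (A ⧸ P) := Ideal.Quotient.nontrivial_iff.mpr hP.ne_top
    haveI : NoZeroSMulDivisors K (A ⧸ P) :=
      inferInstance
    haveI : NoZeroSMulDivisors K K' :=
      inferInstance
    haveI : FiniteDimensional K (A ⧸ P) :=
      Module.Finite.of_surjective (Ideal.Quotient.mkₐ K P).toLinearMap
        (Ideal.Quotient.mkₐ_surjective K P)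
    let χ : A →ₐ[K] K' := (IsAlgClosed.lift).comp (Ideal.Quotient.mkₐ K P)
    have h0 : χ xA = 0 := hχx0 χ
    by_contra hxP
    have hne : Ideal.Quotient.mk P xA ≠ 0 := by
      intro h
      exact hxP (Ideal.Quotient.eq_zero_iff_mem.mp h)
    have hun : IsUnit (Ideal.Quotient.mk P xA) := by
      have hinj : Function.Injective (LinearMap.mulLeft K (Ideal.Quotient.mk P xA)) := by
        intro a b hab
        simp only [LinearMap.mulLeft_apply] at hab
        exact mul_left_cancel₀ hne hab
      obtain ⟨b, hb⟩ := (LinearMap.injective_iff_surjective.mp hinj) 1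
      exact IsUnit.of_mul_eq_one b hb
    have hmk : χ xA = IsAlgClosed.lift (Ideal.Quotient.mk P xA) := rfl
    have : χ xA ≠ 0 := by
      rw [hmk]
      exact ((hun.map (IsAlgClosed.lift : (A ⧸ P) →ₐ[K] K'))).ne_zero
    exact this h0
  obtain ⟨sN, hsN⟩ := hnil
  have hxs : x ^ sN = 0 := by
    have h1 : ((xA ^ sN : A) : H) = x ^ sN := by
      rw [SubmonoidClass.coe_pow]
    rw [← h1, hsN, ZeroMemClass.coe_zero]
  exact nilp_skew_prim_eq_zero c x hcu hcx hΔx sN hxs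
end

section
/- Let H be a cosemisimple Hopf algebra over K with total integral λ ∈ H* (λ(1) = 1 and (id ⊗ λ)∘Δ = λ(·)·1), let c ∈ H be group-like, and let x ∈ H satisfy Δ(x) = c ⊗ x + x ⊗ 1 and x c + c x = 0. Then x = 0. -/
open TensorProduct

/-- if `H` is cosemisimple (has a total integral `λ`), `c` group-like,
`Δ(x) = c ⊗ x + x ⊗ 1` and `xc + cx = 0`, then `x = 0` (char 0). -/
theorem stmt6 (K H : Type*) [Field K] [CharZero K] [Ring H] [HopfAlgebra K H]
    (lam : H →ₗ[K] K) (hlam1 : lam 1 = 1)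
    (hlam : ∀ h : H, psiL K H lam h = lam h • (1 : H))
    (c : H) (hc : IsGrouplike K H c) (hcu : IsUnit c)
    (x : H)
    (hΔx : Coalgebra.comul (R := K) x = c ⊗ₜ[K] x + x ⊗ₜ[K] 1)
    (hanti : x * c + c * x = 0) :
    x = 0 := by
  have hpsi : psiL K H lam x = lam x • c + x := by
    simp only [psiL, LinearMap.coe_comp, Function.comp_apply, hΔx, map_add,
      TensorProduct.map_tmul, LinearMap.id_coe, id_eq, LinearEquiv.coe_coe,
      TensorProduct.rid_tmul, hlam1, one_smul]
  have hx : x = lam x • (1 - c) := by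
    have h := (hlam x).symm.trans hpsi
    rw [smul_sub]
    exact eq_sub_of_add_eq' h.symm
  by_cases h0 : lam x = 0
  · rw [hx, h0, zero_smul]
  · have h2 : lam x • ((1 - c) * c + c * (1 - c)) = 0 := by
      have h : (lam x • (1 - c)) * c + c * (lam x • (1 - c)) = 0 := by rw [← hx]; exact hanti
      simpa [smul_add, smul_mul_assoc, mul_smul_comm] using h
    have h3 : (1 - c) * c + c * (1 - c) = 0 :=
      smul_right_injective H h0 (by simpa using h2)
    have h4 : (2 : K) • (c * (1 - c)) = 0 := by
      have : (1 - c) * c + c * (1 - c) = (2 : K) • (c * (1 - c)) := by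
        rw [two_smul]
        noncomm_ring
      rw [← this]; exact h3
    have h5 : c * (1 - c) = 0 :=
      smul_right_injective H (by norm_num : (2:K) ≠ 0) (by simpa using h4)
    have h6 : (1 : H) - c = 0 := by
      obtain ⟨u, rfl⟩ := hcu
      have := congrArg (fun y => (↑u⁻¹ : H) * y) h5
      simpa [← mul_assoc] using this
    rw [hx, h6, smul_zero]
end

section
/- Let H be a Hopf algebra with an ad-invariant integral, q a primitive N-th root of unity, and (H, g, χ) a Yetter-Drinfeld datum for q. Then a quadruple (H, g, χ, λ) is a compatible datum for q if and only if: λ ∈ K is arbitrary when χ^N = ε and g^N ∈ Z(H)∖{1}, and λ = 0 otherwise. -/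
open TensorProduct

section Aux
open Coalgebra HopfAlgebra TensorProduct

variable {K H : Type*} [CommRing K] [Ring H] [HopfAlgebra K H]

lemma sweedlerAd_repr (z : H) (h : H) (r : Coalgebra.Repr K h (H × H)) :
    sweedlerAd K H z h =
      ∑ i ∈ r.index, r.left i * (z * HopfAlgebra.antipode (R := K) (r.right i)) := by
  rw [sweedlerAd, LinearMap.comp_apply, LinearMap.comp_apply, ← r.eq, map_sum, map_sum]
  simp [TensorProduct.map_tmul, LinearMap.mul'_apply]

lemma repr_sum_counit_smul_right (h : H) (r : Coalgebra.Repr K h (H × H)) :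
    ∑ i ∈ r.index, Coalgebra.counit (R := K) (r.left i) • r.right i = h := by
  have h2 := congrArg (TensorProduct.lid K H) (Coalgebra.sum_counit_tmul_eq r)
  rw [map_sum] at h2
  simp only [TensorProduct.lid_tmul, one_smul] at h2
  exact h2

lemma repr_sum_counit_smul_left (h : H) (r : Coalgebra.Repr K h (H × H)) :
    ∑ i ∈ r.index, Coalgebra.counit (R := K) (r.right i) • r.left i = h := by
  have h2 := congrArg (TensorProduct.rid K H) (Coalgebra.sum_tmul_counit_eq r)
  rw [map_sum] at h2
  simp only [TensorProduct.rid_tmul, one_smul] at h2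
  exact h2

lemma sweedlerAd_of_central (z : H) (hz : ∀ a : H, a * z = z * a) (h : H) :
    sweedlerAd K H z h = Coalgebra.counit (R := K) h • z := by
  have r := ℛ K h
  rw [sweedlerAd_repr z h r]
  have : ∀ i ∈ r.index, r.left i * (z * antipode (R := K) (r.right i)) =
      (r.left i * antipode (R := K) (r.right i)) * z := fun i _ => by
    rw [← hz (antipode (R := K) (r.right i)), ← mul_assoc]
  rw [Finset.sum_congr rfl this, ← Finset.sum_mul, sum_mul_antipode_eq_smul r,
    smul_mul_assoc, one_mul]

lemma central_of_sweedlerAd (z : H)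
    (hz : ∀ h : H, sweedlerAd K H z h = Coalgebra.counit (R := K) h • z) (h : H) :
    h * z = z * h := by
  have r := ℛ K h
  set a₁ : (i : H × H) → Coalgebra.Repr K (r.left i) (H × H) := fun i => ℛ K (r.left i) with ha₁
  set a₂ : (i : H × H) → Coalgebra.Repr K (r.right i) (H × H) := fun i => ℛ K (r.right i) with ha₂
  have key := Coalgebra.sum_tmul_tmul_eq r a₁ a₂
  set m : H →ₗ[K] H := LinearMap.mulLeft K z ∘ₗ HopfAlgebra.antipode (R := K) with hm
  set T : H ⊗[K] (H ⊗[K] H) →ₗ[K] H :=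
    LinearMap.mul' K H ∘ₗ TensorProduct.map LinearMap.id
      (LinearMap.mul' K H ∘ₗ TensorProduct.map m LinearMap.id) with hT
  have key2 := congrArg T key
  simp only [map_sum, hT, hm, LinearMap.comp_apply, TensorProduct.map_tmul,
    LinearMap.id_apply, LinearMap.mul'_apply, LinearMap.mulLeft_apply] at key2
  have hL : (∑ i ∈ r.index, ∑ j ∈ (a₁ i).index,
      (a₁ i).left j * (z * antipode (R := K) ((a₁ i).right j) * r.right i)) = z * h := by
    have e1 : ∀ i ∈ r.index, (∑ j ∈ (a₁ i).index,
        (a₁ i).left j * (z * antipode (R := K) ((a₁ i).right j) * r.right i)) =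
        sweedlerAd K H z (r.left i) * r.right i := fun i _ => by
      rw [sweedlerAd_repr z (r.left i) (a₁ i), Finset.sum_mul]
      exact Finset.sum_congr rfl fun j _ => by simp only [mul_assoc]
    rw [Finset.sum_congr rfl e1]
    have e2 : ∀ i ∈ r.index, sweedlerAd K H z (r.left i) * r.right i =
        Coalgebra.counit (R := K) (r.left i) • (z * r.right i) := fun i _ => by
      rw [hz, smul_mul_assoc]
    rw [Finset.sum_congr rfl e2]
    calc (∑ i ∈ r.index, Coalgebra.counit (R := K) (r.left i) • (z * r.right i))
        = z * ∑ i ∈ r.index, Coalgebra.counit (R := K) (r.left i) • r.right i := by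
          rw [Finset.mul_sum]
          exact Finset.sum_congr rfl fun i _ => (mul_smul_comm _ _ _).symm
      _ = z * h := by rw [repr_sum_counit_smul_right h r]
  have hR : (∑ i ∈ r.index, ∑ j ∈ (a₂ i).index,
      r.left i * (z * antipode (R := K) ((a₂ i).left j) * (a₂ i).right j)) = h * z := by
    have e1 : ∀ i ∈ r.index, (∑ j ∈ (a₂ i).index,
        r.left i * (z * antipode (R := K) ((a₂ i).left j) * (a₂ i).right j)) =
        Coalgebra.counit (R := K) (r.right i) • (r.left i * z) := fun i _ => by
      rw [← Finset.mul_sum]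
      have : (∑ j ∈ (a₂ i).index,
          z * antipode (R := K) ((a₂ i).left j) * (a₂ i).right j) =
          Coalgebra.counit (R := K) (r.right i) • z := by
        calc (∑ j ∈ (a₂ i).index, z * antipode (R := K) ((a₂ i).left j) * (a₂ i).right j)
            = z * ∑ j ∈ (a₂ i).index, antipode (R := K) ((a₂ i).left j) * (a₂ i).right j := by
              rw [Finset.mul_sum]; exact Finset.sum_congr rfl fun j _ => by rw [mul_assoc]
          _ = z * (Coalgebra.counit (R := K) (r.right i) • (1:H)) := by
              rw [sum_antipode_mul_eq_smul (a₂ i)]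
          _ = Coalgebra.counit (R := K) (r.right i) • z := by
              rw [mul_smul_comm, mul_one]
      rw [this, mul_smul_comm]
    rw [Finset.sum_congr rfl e1]
    have : (∑ i ∈ r.index, Coalgebra.counit (R := K) (r.right i) • (r.left i * z)) =
        (∑ i ∈ r.index, Coalgebra.counit (R := K) (r.right i) • r.left i) * z := by
      rw [Finset.sum_mul]; exact Finset.sum_congr rfl fun i _ => (smul_mul_assoc _ _ _).symm
    rw [this, repr_sum_counit_smul_left h r]
  rw [hL, hR] at key2
  exact key2.symm

end Aux

/-- in the presence of an ad-invariant integral, `(H, g, χ, λ)` is a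
compatible datum for `q` iff `λ` is arbitrary when `χᴺ = ε` and `gᴺ ∈ Z(H)∖{1}`,
and `λ = 0` otherwise. -/
theorem stmt13 (K H : Type*) [Field K] [Ring H] [HopfAlgebra K H]
    (γ : H →ₗ[K] K) (hγ : IsAdInvariantIntegral K H γ)
    (N : ℕ) (q : K) (hq : IsPrimitiveRoot q N)
    (g : H) (hg : IsGrouplike K H g)
    (χ : H →ₐ[K] K) (hχg : χ g = q)
    (hYD : ∀ h : H, g * phiMap K H χ h = psiMap K H χ h * g)
    (lam : K) :
    ((g ^ N = 1 ∨ ∃ h : H, convPow K H χ.toLinearMap N h • (1 - g ^ N) ≠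
        sweedlerAd K H (1 - g ^ N) h) → lam = 0) ↔
      ((convPow K H χ.toLinearMap N = Coalgebra.counit ∧
        g ^ N ∈ Set.center H ∧ g ^ N ≠ 1) ∨ lam = 0) := by
  obtain ⟨hγ1, hγ2, hγ3⟩ := hγ
  have hgl : Coalgebra.comul (R := K) (g ^ N) = (g ^ N) ⊗ₜ[K] (g ^ N) := by
    rw [Bialgebra.comul_pow, hg.1, Algebra.TensorProduct.tmul_pow]
  have keyIff :
      ((g ^ N ≠ 1 ∧ ∀ h : H, convPow K H χ.toLinearMap N h • (1 - g ^ N) =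
          sweedlerAd K H (1 - g ^ N) h) ↔
        (convPow K H χ.toLinearMap N = Coalgebra.counit ∧
          g ^ N ∈ Set.center H ∧ g ^ N ≠ 1)) := by
    constructor
    · rintro ⟨hne, hall⟩
      have hγe : γ (g ^ N) = 0 := by
        have h1 := hγ2 (g ^ N)
        rw [psiL, LinearMap.comp_apply, LinearMap.comp_apply, hgl] at h1
        simp only [TensorProduct.map_tmul, LinearMap.id_apply, LinearEquiv.coe_coe,
          TensorProduct.rid_tmul] at h1
        have h2 : γ (g ^ N) • (g ^ N - (1 : H)) = 0 := by
          rw [smul_sub, h1, sub_self]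
        rcases smul_eq_zero.mp h2 with h | h
        · exact h
        · exact absurd (sub_eq_zero.mp h) hne
      have hγz : γ (1 - g ^ N) = 1 := by
        rw [map_sub, hγ1, hγe, sub_zero]
      have hcp : convPow K H χ.toLinearMap N = Coalgebra.counit := by
        ext h
        have h3 := congrArg γ (hall h)
        rw [map_smul, hγ3 h (1 - g ^ N), hγz, smul_eq_mul, mul_one, mul_one] at h3
        exact h3
      have hcent : ∀ a : H, a * (1 - g ^ N) = (1 - g ^ N) * a :=
        central_of_sweedlerAd (1 - g ^ N) (fun h => by rw [← hall h, hcp])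
      refine ⟨hcp, ?_, hne⟩
      rw [Semigroup.mem_center_iff]
      intro a
      have h5 := hcent a
      rw [mul_sub, mul_one, sub_mul, one_mul] at h5
      exact sub_right_inj.mp h5
    · rintro ⟨hcp, hc, hne⟩
      refine ⟨hne, fun h => ?_⟩
      rw [hcp]
      have hzc : ∀ a : H, a * (1 - g ^ N) = (1 - g ^ N) * a := fun a => by
        rw [mul_sub, sub_mul, mul_one, one_mul, Semigroup.mem_center_iff.mp hc a]
      exact (sweedlerAd_of_central _ hzc h).symm
  constructor
  · intro hL
    by_cases hA : (g ^ N = 1 ∨ ∃ h : H, convPow K H χ.toLinearMap N h • (1 - g ^ N) ≠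
        sweedlerAd K H (1 - g ^ N) h)
    · exact Or.inr (hL hA)
    · push_neg at hA
      exact Or.inl (keyIff.mp hA)
  · rintro (hB | hl) hA
    · obtain ⟨hne, hall⟩ := keyIff.mpr hB
      rcases hA with h1 | ⟨h, hh⟩
      · exact absurd h1 hne
      · exact absurd (hall h) hh
    · exact hl
end

section
/- In the 72-dimensional Hopf algebra A generated by Γ, X, Y with relations Γ⁶ = 1, X² = 0, Y⁶ = 0, ΓY = qYΓ, XY = −YX, ΓX = −XΓ (q a primitive 6-th root of unity), Δ(Y) = Y ⊗ 1 + Γ ⊗ Y, Δ(X) = Γ³ ⊗ X + X ⊗ 1, Δ(Γ) = Γ ⊗ Γ, the elements zₙ := Yⁿ − binom(n,3)_q Y^{n−3} X (for 0 ≤ n ≤ 5, with the convention that the second term is 0 for n < 3) satisfy: z₀ = 1, z₁ = Y, z₂ = Y², z₃ = Y³ − X, and zₙ · z₁-recursion: the n-th power of z₁ = Y computed via the twisted multiplication r ·_R s := Σ r₍₁₎ s₍₁₎ σSπ(r₍₂₎s₍₂₎) (with π the H-bilinear coalgebra projection sending Y^i h ↦ δ_{i,0} h + δ_{i,3} X h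 for h in the Hopf subalgebra H generated by Γ and X) equals zₙ. In particular the 4-th power of Y in R differs from Y⁴ in A: z₄ = Y⁴ − (2q−1) Y X ≠ Y⁴. -/
open TensorProduct

/-- `τ(a) = Σ a₁ * S(π(a₂))`. -/
noncomputable def tauMap (K A : Type*) [CommRing K] [Ring A] [HopfAlgebra K A]
    (π : A →ₗ[K] A) : A →ₗ[K] A :=
  LinearMap.mul' K A ∘ₗ
    TensorProduct.map LinearMap.id
      (HopfAlgebra.antipode (R := K) ∘ₗ π) ∘ₗ Coalgebra.comul

/-- Iterated powers of `y` under the twisted multiplication `r ·_R s := τ(r ·_A s)`. -/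
noncomputable def powR (K A : Type*) [CommRing K] [Ring A] [HopfAlgebra K A]
    (π : A →ₗ[K] A) (y : A) : ℕ → A
  | 0 => 1
  | 1 => y
  | n + 2 => tauMap K A π (powR K A π y (n + 1) * y)

/-- The coaction `ρ(r) = Σ π(r₁) ⊗ r₂`. -/
noncomputable def rhoMap (K A : Type*) [CommRing K] [Ring A] [HopfAlgebra K A]
    (π : A →ₗ[K] A) : A →ₗ[K] A ⊗[K] A :=
  TensorProduct.map π LinearMap.id ∘ₗ Coalgebra.comul

/-- in the 72-dimensional Hopf algebra, the `n`-th powers of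
`y = Y` for the twisted multiplication `r ·_R s = τ(rs)` are
`zₙ = Yⁿ − binom(n,3)_q Y^{n−3} X`; in particular the fourth power in `R` is
`Y⁴ − (2q−1)YX ≠ Y⁴`. -/
theorem stmt16
    (K A : Type*) [Field K] [CharZero K] [Ring A] [HopfAlgebra K A]
    (q : K) (hq : IsPrimitiveRoot q 6)
    (Γ X Y : A)
    (hind : LinearIndependent K (fun p : Fin 6 × Fin 2 × Fin 6 =>
      Y ^ (p.1 : ℕ) * X ^ (p.2.1 : ℕ) * Γ ^ (p.2.2 : ℕ)))
    (hΓ6 : Γ ^ 6 = 1) (hX2 : X ^ 2 = 0) (hY6 : Y ^ 6 = 0)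
    (hΓY : Γ * Y = q • (Y * Γ)) (hXY : X * Y = -(Y * X)) (hΓX : Γ * X = -(X * Γ))
    (hΔΓ : Coalgebra.comul (R := K) Γ = Γ ⊗ₜ[K] Γ)
    (hΔX : Coalgebra.comul (R := K) X = (Γ ^ 3) ⊗ₜ[K] X + X ⊗ₜ[K] 1)
    (hΔY : Coalgebra.comul (R := K) Y = Y ⊗ₜ[K] 1 + Γ ⊗ₜ[K] Y)
    (hεΓ : Coalgebra.counit (R := K) Γ = 1)
    (hεX : Coalgebra.counit (R := K) X = 0)
    (hεY : Coalgebra.counit (R := K) Y = 0)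
    (π : A →ₗ[K] A)
    (hπ : ∀ h ∈ Algebra.adjoin K ({Γ, X} : Set A), ∀ i : ℕ, i ≤ 5 →
      π (Y ^ i * h) = (if i = 0 then h else 0) + (if i = 3 then X * h else 0))
    :
    powR K A π Y 0 = 1 ∧ powR K A π Y 1 = Y ∧ powR K A π Y 2 = Y ^ 2 ∧
    powR K A π Y 3 = Y ^ 3 - X ∧
    (∀ n : ℕ, n ≤ 5 →
      powR K A π Y n = Y ^ n - qBinom q n 3 • (Y ^ (n - 3) * X)) ∧
    powR K A π Y 4 = Y ^ 4 - (2 * q - 1) • (Y * X) ∧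
    powR K A π Y 4 ≠ Y ^ 4 := by
  classical
  -- roots of unity arithmetic
  have hq6 : q ^ 6 = 1 := hq.pow_eq_one
  have hq3 : q ^ 3 = -1 := by
    have hne : q ^ 3 ≠ 1 := hq.pow_ne_one_of_pos_of_lt (by norm_num) (by norm_num)
    have hfac : (q ^ 3 - 1) * (q ^ 3 + 1) = 0 := by linear_combination hq6
    rcases mul_eq_zero.mp hfac with h | h
    · exact absurd (by linear_combination h) hne
    · linear_combination h
  have hq2 : q ^ 2 = q - 1 := by
    have hne : q ^ 2 ≠ 1 := hq.pow_ne_one_of_pos_of_lt (by norm_num) (by norm_num)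
    have hfac : (q + 1) * (q ^ 2 - q + 1) = 0 := by linear_combination hq3
    rcases mul_eq_zero.mp hfac with h | h
    · exact absurd (by linear_combination (q - 1) * h) hne
    · linear_combination h
  have hc4 : (1 : K) + q + q ^ 2 + q ^ 3 = 2 * q - 1 := by linear_combination hq2 + hq3
  have hcne : (2 * q - 1 : K) ≠ 0 := by
    intro h
    have h3 : (3 : K) = 0 := by linear_combination (4 : K) * hq2 + (-2 * q + 1) * h
    norm_num at h3
  -- pi values
  have h1mem : (1 : A) ∈ Algebra.adjoin K ({Γ, X} : Set A) := one_mem _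
  have hXmem : X ∈ Algebra.adjoin K ({Γ, X} : Set A) := Algebra.subset_adjoin (by simp)
  have hπ1 : π 1 = 1 := by simpa using hπ 1 h1mem 0 (by norm_num)
  have hπY : π Y = 0 := by simpa using hπ 1 h1mem 1 (by norm_num)
  have hπYY : π (Y * Y) = 0 := by
    have h := hπ 1 h1mem 2 (by norm_num)
    rw [show Y ^ 2 * 1 = Y * Y by noncomm_ring] at h
    simpa using h
  have hπY3 : π (Y * (Y * Y)) = X := by
    have h := hπ 1 h1mem 3 (by norm_num)
    rw [show Y ^ 3 * 1 = Y * (Y * Y) by noncomm_ring] at h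
    simpa using h
  have hπY4 : π (Y * (Y * (Y * Y))) = 0 := by
    have h := hπ 1 h1mem 4 (by norm_num)
    rw [show Y ^ 4 * 1 = Y * (Y * (Y * Y)) by noncomm_ring] at h
    simpa using h
  have hπY5 : π (Y * (Y * (Y * (Y * Y)))) = 0 := by
    have h := hπ 1 h1mem 5 (by norm_num)
    rw [show Y ^ 5 * 1 = Y * (Y * (Y * (Y * Y))) by noncomm_ring] at h
    simpa using h
  have hπX : π X = X := by simpa using hπ X hXmem 0 (by norm_num)
  have hπYX : π (Y * X) = 0 := by
    have h := hπ X hXmem 1 (by norm_num)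
    rw [show Y ^ 1 * X = Y * X by noncomm_ring] at h
    simpa using h
  have hπYYX : π (Y * (Y * X)) = 0 := by
    have h := hπ X hXmem 2 (by norm_num)
    rw [show Y ^ 2 * X = Y * (Y * X) by noncomm_ring] at h
    simpa using h
  -- antipode values
  have hΓ33 : Γ ^ 3 * Γ ^ 3 = 1 := by rw [← pow_add]; norm_num [hΓ6]
  have hS1 : HopfAlgebra.antipode (R := K) (1 : A) = 1 := by
    have h := HopfAlgebra.mul_antipode_rTensor_comul_apply (R := K) (A := A) 1
    rw [Bialgebra.comul_one, Algebra.TensorProduct.one_def] at h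
    simpa using h
  have hcomulΓ3 : Coalgebra.comul (R := K) (Γ ^ 3) = (Γ ^ 3) ⊗ₜ[K] (Γ ^ 3) := by
    have h3 : Γ ^ 3 = Γ * (Γ * Γ) := by noncomm_ring
    have hc : Coalgebra.comul (R := K) (Γ * (Γ * Γ)) =
        (Γ * (Γ * Γ)) ⊗ₜ[K] (Γ * (Γ * Γ)) := by
      simp only [Bialgebra.comul_mul, hΔΓ, Algebra.TensorProduct.tmul_mul_tmul]
    rw [h3, hc, ← h3]
  have hεΓ3 : Coalgebra.counit (R := K) (Γ ^ 3) = 1 := by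
    simp [hεΓ]
  have hSΓ3 : HopfAlgebra.antipode (R := K) (Γ ^ 3) = Γ ^ 3 := by
    have h := HopfAlgebra.mul_antipode_rTensor_comul_apply (R := K) (A := A) (Γ ^ 3)
    rw [hcomulΓ3] at h
    simp only [LinearMap.rTensor_tmul, LinearMap.mul'_apply, hεΓ3, map_one] at h
    calc HopfAlgebra.antipode (R := K) (Γ ^ 3)
        = HopfAlgebra.antipode (R := K) (Γ ^ 3) * (Γ ^ 3 * Γ ^ 3) := by
          rw [hΓ33, mul_one]
      _ = Γ ^ 3 := by rw [← mul_assoc, h, one_mul]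
  have hSX : HopfAlgebra.antipode (R := K) X = -(Γ ^ 3 * X) := by
    have h := HopfAlgebra.mul_antipode_rTensor_comul_apply (R := K) (A := A) X
    rw [hΔX] at h
    simp only [map_add, LinearMap.rTensor_tmul, LinearMap.mul'_apply, hεX, map_zero,
      hSΓ3, mul_one] at h
    exact eq_neg_of_add_eq_zero_left (by rwa [add_comm] at h)
  -- commutation helpers
  have hswap : ∀ z : A, Γ * (Y * z) = q • (Y * (Γ * z)) := by
    intro z
    rw [← mul_assoc, hΓY, smul_mul_assoc, mul_assoc]
  -- comultiplication of powers
  have cY2 : Coalgebra.comul (R := K) (Y ^ 2) =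
      (Y * Y) ⊗ₜ[K] 1 + (1 + q) • ((Y * Γ) ⊗ₜ[K] Y) + (Γ * Γ) ⊗ₜ[K] (Y * Y) := by
    rw [pow_two, Bialgebra.comul_mul, hΔY]
    simp only [mul_add, add_mul, Algebra.TensorProduct.tmul_mul_tmul, smul_mul_assoc,
      mul_smul_comm, ← smul_tmul', smul_smul, one_mul, mul_one, mul_assoc, hΓY, hswap]
    module
  have cY3 : Coalgebra.comul (R := K) (Y ^ 3) =
      (Y * (Y * Y)) ⊗ₜ[K] 1 + (1 + q + q ^ 2) • ((Y * (Y * Γ)) ⊗ₜ[K] Y)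
        + (1 + q + q ^ 2) • ((Y * (Γ * Γ)) ⊗ₜ[K] (Y * Y))
        + (Γ * (Γ * Γ)) ⊗ₜ[K] (Y * (Y * Y)) := by
    rw [pow_succ, Bialgebra.comul_mul, cY2, hΔY]
    simp only [mul_add, add_mul, Algebra.TensorProduct.tmul_mul_tmul, smul_mul_assoc,
      mul_smul_comm, ← smul_tmul', smul_smul, one_mul, mul_one, mul_assoc, hΓY, hswap]
    module
  have cY4 : Coalgebra.comul (R := K) (Y ^ 4) =
      (Y * (Y * (Y * Y))) ⊗ₜ[K] 1
        + (1 + q + q ^ 2 + q ^ 3) • ((Y * (Y * (Y * Γ))) ⊗ₜ[K] Y)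
        + ((1 + q + q ^ 2) * (1 + q ^ 2)) • ((Y * (Y * (Γ * Γ))) ⊗ₜ[K] (Y * Y))
        + (1 + q + q ^ 2 + q ^ 3) • ((Y * (Γ * (Γ * Γ))) ⊗ₜ[K] (Y * (Y * Y)))
        + (Γ * (Γ * (Γ * Γ))) ⊗ₜ[K] (Y * (Y * (Y * Y))) := by
    rw [pow_succ, Bialgebra.comul_mul, cY3, hΔY]
    simp only [mul_add, add_mul, Algebra.TensorProduct.tmul_mul_tmul, smul_mul_assoc,
      mul_smul_comm, ← smul_tmul', smul_smul, one_mul, mul_one, mul_assoc, hΓY, hswap]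
    module
  have cY5 : Coalgebra.comul (R := K) (Y ^ 5) =
      (Y * (Y * (Y * (Y * Y)))) ⊗ₜ[K] 1
        + (1 + q * (1 + q + q ^ 2 + q ^ 3)) • ((Y * (Y * (Y * (Y * Γ)))) ⊗ₜ[K] Y)
        + ((1 + q + q ^ 2 + q ^ 3) + q ^ 2 * ((1 + q + q ^ 2) * (1 + q ^ 2))) •
            ((Y * (Y * (Y * (Γ * Γ)))) ⊗ₜ[K] (Y * Y))
        + ((1 + q + q ^ 2) * (1 + q ^ 2) + q ^ 3 * (1 + q + q ^ 2 + q ^ 3)) •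
            ((Y * (Y * (Γ * (Γ * Γ)))) ⊗ₜ[K] (Y * (Y * Y)))
        + ((1 + q + q ^ 2 + q ^ 3) + q ^ 4) •
            ((Y * (Γ * (Γ * (Γ * Γ)))) ⊗ₜ[K] (Y * (Y * (Y * Y))))
        + (Γ * (Γ * (Γ * (Γ * Γ)))) ⊗ₜ[K] (Y * (Y * (Y * (Y * Y)))) := by
    rw [pow_succ, Bialgebra.comul_mul, cY4, hΔY]
    simp only [mul_add, add_mul, Algebra.TensorProduct.tmul_mul_tmul, smul_mul_assoc,
      mul_smul_comm, ← smul_tmul', smul_smul, one_mul, mul_one, mul_assoc, hΓY, hswap]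
    module
  have cYX : Coalgebra.comul (R := K) (Y * X) =
      (Y * Γ ^ 3) ⊗ₜ[K] X + (Y * X) ⊗ₜ[K] 1 + (Γ * Γ ^ 3) ⊗ₜ[K] (Y * X)
        + (Γ * X) ⊗ₜ[K] Y := by
    rw [Bialgebra.comul_mul, hΔY, hΔX]
    simp only [mul_add, add_mul, Algebra.TensorProduct.tmul_mul_tmul, one_mul, mul_one]
    module
  have cY2X : Coalgebra.comul (R := K) (Y ^ 2 * X) =
      (Y * (Y * Γ ^ 3)) ⊗ₜ[K] X + (Y * (Y * X)) ⊗ₜ[K] 1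
        + (1 + q) • ((Y * (Γ * Γ ^ 3)) ⊗ₜ[K] (Y * X))
        + (1 + q) • ((Y * (Γ * X)) ⊗ₜ[K] Y)
        + (Γ * (Γ * Γ ^ 3)) ⊗ₜ[K] (Y * (Y * X))
        + (Γ * (Γ * X)) ⊗ₜ[K] (Y * Y) := by
    rw [Bialgebra.comul_mul, cY2, hΔX]
    simp only [mul_add, add_mul, Algebra.TensorProduct.tmul_mul_tmul, smul_mul_assoc,
      mul_smul_comm, ← smul_tmul', smul_smul, one_mul, mul_one, mul_assoc]
    module
  -- products with Γ³Γ³ = 1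
  have hkey : ∀ a : A, a * Γ ^ 3 * (Γ ^ 3 * X) = a * X := by
    intro a
    rw [mul_assoc, ← mul_assoc (Γ ^ 3), hΓ33, one_mul]
  -- tau computations
  have htY4 : tauMap K A π (Y ^ 4) = Y ^ 4 - (1 + q + q ^ 2 + q ^ 3) • (Y * X) := by
    simp only [tauMap, LinearMap.coe_comp, Function.comp_apply, cY4, map_add, map_smul,
      TensorProduct.map_tmul, LinearMap.id_coe, id_eq, hπ1, hπY, hπYY, hπY3, hπY4,
      map_zero, tmul_zero, hS1, hSX, LinearMap.mul'_apply, mul_one, smul_zero,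
      add_zero, zero_add, mul_neg]
    rw [show Y * (Γ * (Γ * Γ)) * (Γ ^ 3 * X) = Y * Γ ^ 3 * (Γ ^ 3 * X) by noncomm_ring,
      hkey]
    rw [show Y * (Y * (Y * Y)) = Y ^ 4 by noncomm_ring]
    module
  have htY5 : tauMap K A π (Y ^ 5) =
      Y ^ 5 - ((1 + q + q ^ 2) * (1 + q ^ 2) + q ^ 3 * (1 + q + q ^ 2 + q ^ 3)) •
        (Y ^ 2 * X) := by
    simp only [tauMap, LinearMap.coe_comp, Function.comp_apply, cY5, map_add, map_smul,
      TensorProduct.map_tmul, LinearMap.id_coe, id_eq, hπ1, hπY, hπYY, hπY3, hπY4, hπY5,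
      map_zero, tmul_zero, hS1, hSX, LinearMap.mul'_apply, mul_one, smul_zero,
      add_zero, zero_add, mul_neg]
    rw [show Y * (Y * (Γ * (Γ * Γ))) * (Γ ^ 3 * X) = (Y * Y) * Γ ^ 3 * (Γ ^ 3 * X) by
        noncomm_ring, hkey]
    rw [show Y * (Y * (Y * (Y * Y))) = Y ^ 5 by noncomm_ring,
      show Y * Y * X = Y ^ 2 * X by noncomm_ring]
    module
  have htYX : tauMap K A π (Y * X) = 0 := by
    simp only [tauMap, LinearMap.coe_comp, Function.comp_apply, cYX, map_add,
      TensorProduct.map_tmul, LinearMap.id_coe, id_eq, hπ1, hπY, hπX, hπYX,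
      map_zero, tmul_zero, hS1, hSX, LinearMap.mul'_apply, mul_one, add_zero,
      zero_add, mul_neg]
    rw [show Y * Γ ^ 3 * (Γ ^ 3 * X) = Y * X from hkey Y]
    abel
  have htY2X : tauMap K A π (Y ^ 2 * X) = 0 := by
    simp only [tauMap, LinearMap.coe_comp, Function.comp_apply, cY2X, map_add, map_smul,
      TensorProduct.map_tmul, LinearMap.id_coe, id_eq, hπ1, hπY, hπYY, hπX, hπYX, hπYYX,
      map_zero, tmul_zero, hS1, hSX, LinearMap.mul'_apply, mul_one, smul_zero,
      add_zero, zero_add, mul_neg]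
    rw [show Y * (Y * Γ ^ 3) * (Γ ^ 3 * X) = (Y * Y) * Γ ^ 3 * (Γ ^ 3 * X) by noncomm_ring,
      hkey]
    rw [show Y * Y * X = Y * (Y * X) by noncomm_ring]
    abel
  -- the powers
  have hpow2 : powR K A π Y 2 = Y ^ 2 := by
    have h0 : powR K A π Y 2 = tauMap K A π (Y * Y) := rfl
    rw [h0, show Y * Y = Y ^ 2 by rw [pow_two]]
    simp only [tauMap, LinearMap.coe_comp, Function.comp_apply, cY2, map_add, map_smul,
      TensorProduct.map_tmul, LinearMap.id_coe, id_eq, hπ1, hπY, hπYY, map_zero,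
      tmul_zero, hS1, LinearMap.mul'_apply, mul_one, smul_zero, add_zero, zero_add]
    noncomm_ring
  have hpow3 : powR K A π Y 3 = Y ^ 3 - X := by
    have h0 : powR K A π Y 3 = tauMap K A π (powR K A π Y 2 * Y) := rfl
    rw [h0, hpow2, ← pow_succ]
    simp only [tauMap, LinearMap.coe_comp, Function.comp_apply, cY3, map_add, map_smul,
      TensorProduct.map_tmul, LinearMap.id_coe, id_eq, hπ1, hπY, hπYY, hπY3, map_zero,
      tmul_zero, hS1, hSX, LinearMap.mul'_apply, mul_one, smul_zero, add_zero, zero_add,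
      mul_neg]
    rw [show Γ * (Γ * Γ) * (Γ ^ 3 * X) = 1 * Γ ^ 3 * (Γ ^ 3 * X) by noncomm_ring, hkey,
      one_mul]
    rw [show Y * (Y * Y) = Y ^ 3 by noncomm_ring]
    abel
  have hpow4 : powR K A π Y 4 = Y ^ 4 - (1 + q + q ^ 2 + q ^ 3) • (Y * X) := by
    have h0 : powR K A π Y 4 = tauMap K A π (powR K A π Y 3 * Y) := rfl
    rw [h0, hpow3, show (Y ^ 3 - X) * Y = Y ^ 4 + Y * X by
      rw [sub_mul, hXY, ← pow_succ, sub_neg_eq_add]]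
    rw [map_add, htY4, htYX, add_zero]
  have hpow5 : powR K A π Y 5 =
      Y ^ 5 - ((1 + q + q ^ 2) * (1 + q ^ 2) + q ^ 3 * (1 + q + q ^ 2 + q ^ 3)) •
        (Y ^ 2 * X) := by
    have h0 : powR K A π Y 5 = tauMap K A π (powR K A π Y 4 * Y) := rfl
    rw [h0, hpow4, show (Y ^ 4 - (1 + q + q ^ 2 + q ^ 3) • (Y * X)) * Y =
        Y ^ 5 + (1 + q + q ^ 2 + q ^ 3) • (Y ^ 2 * X) by
      rw [sub_mul, smul_mul_assoc, mul_assoc, hXY, ← pow_succ]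
      rw [show Y * -(Y * X) = -(Y ^ 2 * X) by noncomm_ring, smul_neg, sub_neg_eq_add]]
    rw [map_add, map_smul, htY5, htY2X, smul_zero, add_zero]
  -- qBinom values
  have qB3 : qBinom q 3 3 = 1 := by norm_num [qBinom]
  have qB4 : qBinom q 4 3 = 1 + q + q ^ 2 + q ^ 3 := by norm_num [qBinom]
  have qB5 : qBinom q 5 3 =
      (1 + q + q ^ 2) * (1 + q ^ 2) + q ^ 3 * (1 + q + q ^ 2 + q ^ 3) := by
    norm_num [qBinom]; ring
  -- nonvanishing
  have hYX : Y * X ≠ 0 := by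
    have h := hind.ne_zero ((1 : Fin 6), (1 : Fin 2), (0 : Fin 6))
    simpa using h
  have hne : powR K A π Y 4 ≠ Y ^ 4 := by
    rw [hpow4, hc4]
    intro h
    have h2 : (2 * q - 1) • (Y * X) = 0 := by
      have := sub_eq_self.mp h
      exact this
    rcases smul_eq_zero.mp h2 with h3 | h3
    · exact hcne h3
    · exact hYX h3
  refine ⟨rfl, rfl, hpow2, hpow3, ?_, by rw [hpow4, hc4], hne⟩
  intro n hn
  interval_cases n
  · norm_num [powR, qBinom]
  · norm_num [powR, qBinom]
  · rw [hpow2]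
    norm_num [qBinom]
  · rw [hpow3, qB3]
    norm_num
  · rw [hpow4, qB4]
    norm_num
  · rw [hpow5, qB5]
end

section
/- Keep the setting of the 72-dimensional Hopf algebra A of the previous example with projection π(Y^i h) = δ_{i,0}h + δ_{i,3}Xh. Define the coaction ρ : R → H ⊗ R by ρ(r) = Σ π(r₍₁₎) ⊗ r₍₂₎. Then ρ(y²) = Γ² ⊗ y² where y = Y ∈ R, while ρ(y⁴) = Γ⁴ ⊗ y⁴ + 2 binom(4,3)_q XΓ ⊗ y (with y⁴ the 4-th power of y in R). Hence ρ(y² ·_R y²) ≠ (Γ² · Γ²) ⊗ (y² ·_R y²), i.e. the multiplication of R is not left H-colinear. -/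
open TensorProduct

/-- for the coaction `ρ(r) = Σ π(r₁) ⊗ r₂` one has
`ρ(y²) = Γ² ⊗ y²` but `ρ(y⁴) = Γ⁴ ⊗ y⁴ + 2·binom(4,3)_q XΓ ⊗ y`; hence
`ρ(y² ·_R y²) ≠ Γ²Γ² ⊗ (y² ·_R y²)`, i.e. the multiplication of `R` is not
left `H`-colinear. -/
theorem stmt17
    (K A : Type*) [Field K] [CharZero K] [Ring A] [HopfAlgebra K A]
    (q : K) (hq : IsPrimitiveRoot q 6)
    (Γ X Y : A)
    (hind : LinearIndependent K (fun p : Fin 6 × Fin 2 × Fin 6 =>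
      Y ^ (p.1 : ℕ) * X ^ (p.2.1 : ℕ) * Γ ^ (p.2.2 : ℕ)))
    (hΓ6 : Γ ^ 6 = 1) (hX2 : X ^ 2 = 0) (hY6 : Y ^ 6 = 0)
    (hΓY : Γ * Y = q • (Y * Γ)) (hXY : X * Y = -(Y * X)) (hΓX : Γ * X = -(X * Γ))
    (hΔΓ : Coalgebra.comul (R := K) Γ = Γ ⊗ₜ[K] Γ)
    (hΔX : Coalgebra.comul (R := K) X = (Γ ^ 3) ⊗ₜ[K] X + X ⊗ₜ[K] 1)
    (hΔY : Coalgebra.comul (R := K) Y = Y ⊗ₜ[K] 1 + Γ ⊗ₜ[K] Y)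
    (hεΓ : Coalgebra.counit (R := K) Γ = 1)
    (hεX : Coalgebra.counit (R := K) X = 0)
    (hεY : Coalgebra.counit (R := K) Y = 0)
    (π : A →ₗ[K] A)
    (hπ : ∀ h ∈ Algebra.adjoin K ({Γ, X} : Set A), ∀ i : ℕ, i ≤ 5 →
      π (Y ^ i * h) = (if i = 0 then h else 0) + (if i = 3 then X * h else 0))
    :
    rhoMap K A π (powR K A π Y 2) = (Γ ^ 2) ⊗ₜ[K] powR K A π Y 2 ∧
    rhoMap K A π (powR K A π Y 4) =
      (Γ ^ 4) ⊗ₜ[K] powR K A π Y 4 +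
        (2 * qBinom q 4 3) • ((X * Γ) ⊗ₜ[K] Y) ∧
    rhoMap K A π (tauMap K A π (powR K A π Y 2 * powR K A π Y 2)) ≠
      (Γ ^ 2 * Γ ^ 2) ⊗ₜ[K]
        tauMap K A π (powR K A π Y 2 * powR K A π Y 2) := by
  -- scalar facts
  obtain ⟨h3, h2, hc⟩ : q^3 = -1 ∧ q^2 = q - 1 ∧ (2:K)*(2*q-1) ≠ 0 := by
    have h6 : q^6 = 1 := hq.pow_eq_one
    have h3' : q^3 ≠ 1 := hq.pow_ne_one_of_pos_of_lt (by norm_num) (by norm_num)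
    have h3 : q^3 = -1 := by
      have hf : (q^3 - 1) * (q^3 + 1) = 0 := by linear_combination h6
      rcases mul_eq_zero.mp hf with h | h
      · exact absurd (by linear_combination h : q^3 = 1) h3'
      · linear_combination h
    have h2' : q ≠ -1 := by
      intro h; apply hq.pow_ne_one_of_pos_of_lt (l := 2) (by norm_num) (by norm_num)
      rw [h]; ring
    have h2 : q^2 = q - 1 := by
      have hfac : (q + 1) * (q^2 - q + 1) = 0 := by linear_combination h3
      rcases mul_eq_zero.mp hfac with h | h
      · exact absurd (by linear_combination h : q = -1) h2'
      · linear_combination h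
    refine ⟨h3, h2, ?_⟩
    intro h
    have hq12 : q = 1/2 := by linear_combination h/4
    rw [hq12] at h2; norm_num at h2
  -- antipode facts
  set S : A →ₗ[K] A := HopfAlgebra.antipode (R := K) with hSdef
  have hS1 : S 1 = 1 := by
    have h := HopfAlgebra.mul_antipode_rTensor_comul_apply (R := K) (1:A)
    simpa [Bialgebra.comul_one, Bialgebra.counit_one, Algebra.TensorProduct.one_def,
      LinearMap.rTensor_tmul, LinearMap.mul'_apply, hSdef] using h
  have hΔΓ3 : Coalgebra.comul (R := K) (Γ^3) = (Γ^3) ⊗ₜ[K] (Γ^3) := by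
    rw [Bialgebra.comul_pow, hΔΓ, Algebra.TensorProduct.tmul_pow]
  have hSΓ3mul : S (Γ^3) * Γ^3 = 1 := by
    have h := HopfAlgebra.mul_antipode_rTensor_comul_apply (R := K) (Γ^3)
    simpa [hΔΓ3, hεΓ] using h
  have hSΓ3 : S (Γ^3) = Γ^3 := by
    calc S (Γ^3) = S (Γ^3) * (Γ^3 * Γ^3) := by rw [← pow_add, hΓ6, mul_one]
    _ = (S (Γ^3) * Γ^3) * Γ^3 := by rw [mul_assoc]
    _ = Γ^3 := by rw [hSΓ3mul, one_mul]
  have hSX : S X = -(Γ^3 * X) := by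
    have h := HopfAlgebra.mul_antipode_rTensor_comul_apply (R := K) X
    rw [hΔX, hεX] at h
    simp only [map_add, LinearMap.rTensor_tmul, LinearMap.mul'_apply, map_zero, mul_one,
      hSΓ3] at h
    have h' : S (Γ^3) * X + S X = 0 := h
    rw [hSΓ3] at h'
    exact eq_neg_of_add_eq_zero_right h'
  -- commutation facts
  have hG2Y : Γ^2 * Y = (q^2) • (Y * Γ^2) := by
    rw [pow_two, mul_assoc, hΓY, mul_smul_comm, ← mul_assoc, hΓY, smul_mul_assoc,
      smul_smul, mul_assoc, ← pow_two, ← mul_assoc]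
  have hG3Y : Γ^3 * Y = (q^3) • (Y * Γ^3) := by
    rw [pow_succ, mul_assoc, hΓY, mul_smul_comm, ← mul_assoc, hG2Y, smul_mul_assoc,
      smul_smul, mul_assoc, ← pow_succ]
    module
  have hm1 : (Y*Γ)*Y = q • (Y^2*Γ) := by
    rw [mul_assoc, hΓY, mul_smul_comm, ← mul_assoc, ← pow_two]
  have hm2 : (Y*Γ)*Γ = Y*Γ^2 := by rw [mul_assoc, ← pow_two]
  have hm4 : (Y^2*Γ)*Y = q • (Y^3*Γ) := by
    rw [mul_assoc, hΓY, mul_smul_comm, ← mul_assoc, ← pow_succ]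
  have hm5 : (Y^2*Γ)*Γ = Y^2*Γ^2 := by rw [mul_assoc, ← pow_two]
  have hm6 : (Y*Γ^2)*Y = (q^2) • (Y^2*Γ^2) := by
    rw [mul_assoc, hG2Y, mul_smul_comm, ← mul_assoc, ← pow_two]
  have hm7 : (Y*Γ^2)*Γ = Y*Γ^3 := by rw [mul_assoc, ← pow_succ]
  have hm8 : (Y*Γ^3)*Y = (q^3) • (Y^2*Γ^3) := by
    rw [mul_assoc, hG3Y, mul_smul_comm, ← mul_assoc, ← pow_two]
  have hm9 : (Y*Γ^3)*Γ = Y*Γ^4 := by rw [mul_assoc, ← pow_succ]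
  -- comul computations
  have cY2 : Coalgebra.comul (R := K) (Y^2) = (Y^2) ⊗ₜ[K] 1 + (1+q) • ((Y*Γ) ⊗ₜ[K] Y)
      + (Γ^2) ⊗ₜ[K] (Y^2) := by
    rw [Bialgebra.comul_pow, hΔY, pow_two, add_mul, mul_add, mul_add]
    simp only [Algebra.TensorProduct.tmul_mul_tmul, mul_one, one_mul, hΓY,
      ← TensorProduct.smul_tmul']
    rw [show Y*Y = Y^2 from (pow_two Y).symm, show Γ*Γ = Γ^2 from (pow_two Γ).symm]
    module
  have cY3 : Coalgebra.comul (R := K) (Y^3) = (Y^3) ⊗ₜ[K] 1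
      + (1+q+q^2) • ((Y^2*Γ) ⊗ₜ[K] Y) + (1+q+q^2) • ((Y*Γ^2) ⊗ₜ[K] (Y^2))
      + (Γ^3) ⊗ₜ[K] (Y^3) := by
    rw [show (Y:A)^3 = Y^2*Y from (pow_succ Y 2), Bialgebra.comul_mul, cY2, hΔY]
    simp only [add_mul, mul_add, smul_mul_assoc, Algebra.TensorProduct.tmul_mul_tmul,
      mul_one, one_mul, hm1, hm2, hG2Y, smul_smul, ← TensorProduct.smul_tmul',
      TensorProduct.smul_tmul, TensorProduct.tmul_smul]
    rw [show Y*Y = Y^2 from (pow_two Y).symm, show (Y:A)^2*Y = Y^3 from (pow_succ Y 2).symm,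
      show (Γ:A)^2*Γ = Γ^3 from (pow_succ Γ 2).symm]
    module
  have cY4 : Coalgebra.comul (R := K) (Y^4) = (Y^4) ⊗ₜ[K] 1
      + (1+q+q^2+q^3) • ((Y^3*Γ) ⊗ₜ[K] Y)
      + ((1+q+q^2)*(1+q^2)) • ((Y^2*Γ^2) ⊗ₜ[K] (Y^2))
      + (1+q+q^2+q^3) • ((Y*Γ^3) ⊗ₜ[K] (Y^3))
      + (Γ^4) ⊗ₜ[K] (Y^4) := by
    rw [show (Y:A)^4 = Y^3*Y from (pow_succ Y 3), Bialgebra.comul_mul, cY3, hΔY]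
    simp only [add_mul, mul_add, smul_mul_assoc, Algebra.TensorProduct.tmul_mul_tmul,
      mul_one, one_mul, hm4, hm5, hm6, hm7, hG3Y, smul_smul, ← TensorProduct.smul_tmul',
      TensorProduct.tmul_smul]
    rw [show (Y:A)^3*Y = Y^4 from (pow_succ Y 3).symm,
      show (Γ:A)^3*Γ = Γ^4 from (pow_succ Γ 3).symm,
      show Y*Y = Y^2 from (pow_two Y).symm,
      show (Y:A)^2*Y = Y^3 from (pow_succ Y 2).symm]
    match_scalars <;> ring
  have cYX : Coalgebra.comul (R := K) (Y*X) = (Y*Γ^3) ⊗ₜ[K] X + (Y*X) ⊗ₜ[K] 1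
      + (Γ^4) ⊗ₜ[K] (Y*X) - (X*Γ) ⊗ₜ[K] Y := by
    rw [Bialgebra.comul_mul, hΔY, hΔX]
    simp only [add_mul, mul_add, Algebra.TensorProduct.tmul_mul_tmul, mul_one, one_mul, hΓX,
      neg_tmul, tmul_neg]
    rw [show Γ*Γ^3 = Γ^4 from (pow_succ' Γ 3).symm]
    module

  -- more product facts
  have hG33 : Γ^3 * Γ^3 = 1 := by
    rw [← pow_add]; norm_num [hΓ6]
  have hm10 : Γ^3*(Γ^3*X) = X := by rw [← mul_assoc, hG33, one_mul]
  have hm11 : (Y*Γ^3)*(Γ^3*X) = Y*X := by rw [mul_assoc, hm10]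
  -- pi values
  have hmemΓ : Γ ∈ Algebra.adjoin K ({Γ,X}:Set A) := Algebra.subset_adjoin (by simp)
  have hmemX : X ∈ Algebra.adjoin K ({Γ,X}:Set A) := Algebra.subset_adjoin (by simp)
  have π1 : π 1 = 1 := by simpa using hπ 1 (one_mem _) 0 (by norm_num)
  have πY : π Y = 0 := by simpa using hπ 1 (one_mem _) 1 (by norm_num)
  have πY2 : π (Y^2) = 0 := by simpa using hπ 1 (one_mem _) 2 (by norm_num)
  have πY3 : π (Y^3) = X := by simpa using hπ 1 (one_mem _) 3 (by norm_num)
  have πY4 : π (Y^4) = 0 := by simpa using hπ 1 (one_mem _) 4 (by norm_num)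
  have πΓ2 : π (Γ^2) = Γ^2 := by simpa using hπ (Γ^2) (pow_mem hmemΓ 2) 0 (by norm_num)
  have πΓ4 : π (Γ^4) = Γ^4 := by simpa using hπ (Γ^4) (pow_mem hmemΓ 4) 0 (by norm_num)
  have πX : π X = X := by simpa using hπ X hmemX 0 (by norm_num)
  have πXΓ : π (X*Γ) = X*Γ := by
    simpa using hπ (X*Γ) (mul_mem hmemX hmemΓ) 0 (by norm_num)
  have πYΓ : π (Y*Γ) = 0 := by simpa using hπ Γ hmemΓ 1 (by norm_num)
  have πY2Γ : π (Y^2*Γ) = 0 := by simpa using hπ Γ hmemΓ 2 (by norm_num)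
  have πY3Γ : π (Y^3*Γ) = X*Γ := by simpa using hπ Γ hmemΓ 3 (by norm_num)
  have πYΓ2 : π (Y*Γ^2) = 0 := by simpa using hπ (Γ^2) (pow_mem hmemΓ 2) 1 (by norm_num)
  have πY2Γ2 : π (Y^2*Γ^2) = 0 := by simpa using hπ (Γ^2) (pow_mem hmemΓ 2) 2 (by norm_num)
  have πYΓ3 : π (Y*Γ^3) = 0 := by simpa using hπ (Γ^3) (pow_mem hmemΓ 3) 1 (by norm_num)
  have πYX : π (Y*X) = 0 := by simpa using hπ X hmemX 1 (by norm_num)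
  -- tau computations
  have tapp : ∀ a : A, tauMap K A π a =
      LinearMap.mul' K A ((TensorProduct.map LinearMap.id (S ∘ₗ π)) (Coalgebra.comul a)) :=
    fun a => rfl
  have tY2 : tauMap K A π (Y^2) = Y^2 := by
    rw [tapp, cY2]
    simp only [map_add, map_smul, TensorProduct.map_tmul, LinearMap.id_coe, id_eq,
      LinearMap.comp_apply, π1, πY, πY2, map_zero, hS1, LinearMap.mul'_apply,
      mul_one, mul_zero, smul_zero, add_zero, zero_add]
  have tY3 : tauMap K A π (Y^3) = Y^3 - X := by
    rw [tapp, cY3]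
    simp only [map_add, map_smul, TensorProduct.map_tmul, LinearMap.id_coe, id_eq,
      LinearMap.comp_apply, π1, πY, πY2, πY3, map_zero, hS1, hSX, LinearMap.mul'_apply,
      mul_one, mul_zero, smul_zero, add_zero, zero_add, mul_neg, hm10]
    rw [sub_eq_add_neg]
  have tY4 : tauMap K A π (Y^4) = Y^4 - (1+q+q^2+q^3) • (Y*X) := by
    rw [tapp, cY4]
    simp only [map_add, map_smul, TensorProduct.map_tmul, LinearMap.id_coe, id_eq,
      LinearMap.comp_apply, π1, πY, πY2, πY3, πY4, map_zero, hS1, hSX, LinearMap.mul'_apply,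
      mul_one, mul_zero, smul_zero, add_zero, zero_add, mul_neg, hm11, smul_neg]
    rw [sub_eq_add_neg]
  have tYX : tauMap K A π (Y*X) = 0 := by
    rw [tapp, cYX]
    simp only [map_add, map_sub, map_smul, TensorProduct.map_tmul, LinearMap.id_coe, id_eq,
      LinearMap.comp_apply, π1, πY, πX, πYX, map_zero, hS1, hSX, LinearMap.mul'_apply,
      mul_one, mul_zero, smul_zero, add_zero, zero_add, mul_neg, hm11, sub_zero]
    exact neg_add_cancel _
  -- powR values
  have p2 : powR K A π Y 2 = Y^2 := by
    have e : powR K A π Y 2 = tauMap K A π (Y * Y) := rfl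
    rw [e, show Y*Y = Y^2 from (pow_two Y).symm, tY2]
  have p3 : powR K A π Y 3 = Y^3 - X := by
    have e : powR K A π Y 3 = tauMap K A π (powR K A π Y 2 * Y) := rfl
    rw [e, p2, show (Y:A)^2*Y = Y^3 from (pow_succ Y 2).symm, tY3]
  have p4 : powR K A π Y 4 = Y^4 - (1+q+q^2+q^3) • (Y*X) := by
    have e : powR K A π Y 4 = tauMap K A π (powR K A π Y 3 * Y) := rfl
    rw [e, p3, sub_mul, show (Y:A)^3*Y = Y^4 from (pow_succ Y 3).symm, hXY,
      sub_neg_eq_add, map_add, tY4, tYX, add_zero]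
  -- rho computations
  have rapp : ∀ a : A, rhoMap K A π a =
      (TensorProduct.map π LinearMap.id) (Coalgebra.comul a) := fun a => rfl
  have rY2 : rhoMap K A π (Y^2) = (Γ^2) ⊗ₜ[K] (Y^2) := by
    rw [rapp, cY2]
    simp only [map_add, map_smul, TensorProduct.map_tmul, LinearMap.id_coe, id_eq,
      πY2, πYΓ, πΓ2, zero_tmul, smul_zero, add_zero, zero_add]
  have rY4 : rhoMap K A π (Y^4) = (Γ^4) ⊗ₜ[K] (Y^4)
      + (1+q+q^2+q^3) • ((X*Γ) ⊗ₜ[K] Y) := by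
    rw [rapp, cY4]
    simp only [map_add, map_smul, TensorProduct.map_tmul, LinearMap.id_coe, id_eq,
      πY4, πY3Γ, πY2Γ2, πYΓ3, πΓ4, zero_tmul, smul_zero, add_zero, zero_add]
    rw [add_comm]
  have rYX : rhoMap K A π (Y*X) = (Γ^4) ⊗ₜ[K] (Y*X) - (X*Γ) ⊗ₜ[K] Y := by
    rw [rapp, cYX]
    simp only [map_add, map_sub, TensorProduct.map_tmul, LinearMap.id_coe, id_eq,
      πYΓ3, πYX, πΓ4, πXΓ, zero_tmul, add_zero, zero_add]
  have hqb : qBinom q 4 3 = 1+q+q^2+q^3 := by simp [qBinom]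
  -- nonzero facts
  have hXΓ0 : X*Γ ≠ 0 := by
    have := hind.ne_zero ⟨(0 : Fin 6), (1 : Fin 2), (1 : Fin 6)⟩
    simpa using this
  have hY0 : Y ≠ 0 := by
    have := hind.ne_zero ⟨(1 : Fin 6), (0 : Fin 2), (0 : Fin 6)⟩
    simpa using this
  have hcoef : (2:K)*(1+q+q^2+q^3) ≠ 0 := by
    have : (2:K)*(1+q+q^2+q^3) = 2*(2*q-1) := by rw [h2, h3]; ring
    rw [this]; exact hc
  have hsmulne : ((2:K)*(1+q+q^2+q^3)) • ((X*Γ) ⊗ₜ[K] Y) ≠ 0 := by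
    intro h0
    obtain ⟨f, hf⟩ : ∃ f : Module.Dual K A, f (X*Γ) ≠ 0 := by
      by_contra hcon
      push_neg at hcon
      exact hXΓ0 ((Module.forall_dual_apply_eq_zero_iff K (X*Γ)).mp hcon)
    obtain ⟨g, hg⟩ : ∃ g : Module.Dual K A, g Y ≠ 0 := by
      by_contra hcon
      push_neg at hcon
      exact hY0 ((Module.forall_dual_apply_eq_zero_iff K Y).mp hcon)
    have := congrArg (LinearMap.mul' K K ∘ₗ TensorProduct.map f g) h0
    simp only [map_smul, map_zero, LinearMap.comp_apply, TensorProduct.map_tmul,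
      LinearMap.mul'_apply, smul_eq_mul] at this
    exact hcoef (by
      rcases mul_eq_zero.mp this with h | h
      · exact h
      · exact absurd h (mul_ne_zero hf hg))
  refine ⟨?_, ?_, ?_⟩
  · rw [p2, rY2]
  · rw [p4, map_sub, map_smul, rY4, rYX, hqb]
    simp only [TensorProduct.tmul_sub, TensorProduct.tmul_smul, smul_sub]
    module
  · rw [p2, show (Y:A)^2*Y^2 = Y^4 from by rw [← pow_add], tY4]
    intro hEq
    rw [map_sub, map_smul, rY4, rYX] at hEq
    apply hsmulne
    have h4 : (Γ:A)^2*Γ^2 = Γ^4 := by rw [← pow_add]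
    rw [h4] at hEq
    have expand : (Γ^4) ⊗ₜ[K] (Y^4 - (1+q+q^2+q^3) • (Y*X))
        = (Γ^4) ⊗ₜ[K] (Y^4) - (1+q+q^2+q^3) • ((Γ^4) ⊗ₜ[K] (Y*X)) := by
      rw [TensorProduct.tmul_sub, TensorProduct.tmul_smul]
    rw [expand] at hEq
    have : ((2:K)*(1+q+q^2+q^3)) • ((X*Γ) ⊗ₜ[K] Y)
        = ((Γ^4) ⊗ₜ[K] (Y^4) + (1+q+q^2+q^3) • ((X*Γ) ⊗ₜ[K] Y)
            - (1+q+q^2+q^3) • ((Γ^4) ⊗ₜ[K] (Y*X) - (X*Γ) ⊗ₜ[K] Y))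
          - ((Γ^4) ⊗ₜ[K] (Y^4) - (1+q+q^2+q^3) • ((Γ^4) ⊗ₜ[K] (Y*X))) := by
      module
    rw [this, hEq, sub_self]
end

section
/- In the 72-dimensional Hopf algebra A of the previous examples, the cocycle ξ : R ⊗ R → H defined by ξ(r ⊗ s) = π(r ·_A s) satisfies ξ(y ⊗ y²) = X ≠ ε(y)ε(y²)·1, where y = Y and y² = Y². In particular ξ is non-trivial, so π is not an algebra homomorphism and A is not the Radford–Majid bosonization of R over H via π. -/
open TensorProduct

/-- the cocycle `ξ(r ⊗ s) = π(r ·_A s)` satisfies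
`ξ(y ⊗ y²) = π(Y·Y²) = X ≠ ε(y)ε(y²)·1`; in particular `ξ` is non-trivial. -/
theorem stmt18
    (K A : Type*) [Field K] [CharZero K] [Ring A] [HopfAlgebra K A]
    (q : K) (hq : IsPrimitiveRoot q 6)
    (Γ X Y : A)
    (hind : LinearIndependent K (fun p : Fin 6 × Fin 2 × Fin 6 =>
      Y ^ (p.1 : ℕ) * X ^ (p.2.1 : ℕ) * Γ ^ (p.2.2 : ℕ)))
    (hΓ6 : Γ ^ 6 = 1) (hX2 : X ^ 2 = 0) (hY6 : Y ^ 6 = 0)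
    (hΓY : Γ * Y = q • (Y * Γ)) (hXY : X * Y = -(Y * X)) (hΓX : Γ * X = -(X * Γ))
    (hΔΓ : Coalgebra.comul (R := K) Γ = Γ ⊗ₜ[K] Γ)
    (hΔX : Coalgebra.comul (R := K) X = (Γ ^ 3) ⊗ₜ[K] X + X ⊗ₜ[K] 1)
    (hΔY : Coalgebra.comul (R := K) Y = Y ⊗ₜ[K] 1 + Γ ⊗ₜ[K] Y)
    (hεΓ : Coalgebra.counit (R := K) Γ = 1)
    (hεX : Coalgebra.counit (R := K) X = 0)
    (hεY : Coalgebra.counit (R := K) Y = 0)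
    (π : A →ₗ[K] A)
    (hπ : ∀ h ∈ Algebra.adjoin K ({Γ, X} : Set A), ∀ i : ℕ, i ≤ 5 →
      π (Y ^ i * h) = (if i = 0 then h else 0) + (if i = 3 then X * h else 0))
    :
    π (Y * Y ^ 2) = X ∧
    π (Y * Y ^ 2) ≠
      (Coalgebra.counit (R := K) Y * Coalgebra.counit (R := K) (Y ^ 2)) •
        (1 : A) := by
  have h1 : π (Y * Y ^ 2) = X := by
    have := hπ 1 (Subalgebra.one_mem _) 3 (by norm_num)
    simpa [← pow_succ', mul_one] using this
  refine ⟨h1, ?_⟩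
  rw [h1, hεY, zero_mul, zero_smul]
  intro hX0
  have := hind.ne_zero ((0 : Fin 6), (1 : Fin 2), (0 : Fin 6))
  simp [hX0] at this
end
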